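/- arXiv:2503.10574 — 3 statements merged into one kernel-verified Lean document; each statement's English description precedes it below -/
import Mathlib

section
/- Let μ be a Borel probability measure on [0,1], let C₀ ≥ 0 and 0 ≤ ε < 1, and set â := (1+ε)·∫(θ² + (1-θ)²) dμ(θ). Suppose â < 1 and that f : ℕ → ℝ satisfies f(0) = 0 and, for every ℓ ≥ 1, f(ℓ) ≤ C₀ℓ² + (1+ε)·E[f(ℓ-1-R_ℓ) + f(R_ℓ)], where the expectation is over θ ~ μ and, conditionally on θ, R_ℓ ~ Binomial(ℓ-1, θ). Then f(ℓ) ≤ C₀·(2/(1-â))·ℓ² for all ℓ ∈ ℕ. -/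
open MeasureTheory

/-- Expectation of `g (R_ℓ)` where `θ ~ μ` and, conditionally on `θ`,
`R_ℓ ~ Binomial(ℓ-1, θ)`. -/
noncomputable def binExp (μ : Measure ℝ) (ℓ : ℕ) (g : ℕ → ℝ) : ℝ :=
  ∫ θ, ∑ k ∈ Finset.range ℓ,
    ((ℓ - 1).choose k : ℝ) * θ ^ k * (1 - θ) ^ (ℓ - 1 - k) * g k ∂μ


lemma bern_eval (n k : ℕ) (θ : ℝ) :
    Polynomial.eval θ (bernsteinPolynomial ℝ n k)
      = (n.choose k : ℝ) * θ ^ k * (1 - θ) ^ (n - k) := by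
  simp [bernsteinPolynomial]

lemma bsum0 (n : ℕ) (θ : ℝ) :
    ∑ k ∈ Finset.range (n + 1), (n.choose k : ℝ) * θ ^ k * (1 - θ) ^ (n - k) = 1 := by
  have := congrArg (Polynomial.eval θ) (bernsteinPolynomial.sum ℝ n)
  simpa [Polynomial.eval_finset_sum, bern_eval] using this

lemma bsum1 (n : ℕ) (θ : ℝ) :
    ∑ k ∈ Finset.range (n + 1),
      (n.choose k : ℝ) * θ ^ k * (1 - θ) ^ (n - k) * (k : ℝ) = (n : ℝ) * θ := by
  have := congrArg (Polynomial.eval θ) (bernsteinPolynomial.sum_smul ℝ n)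
  simp only [Polynomial.eval_finset_sum, Polynomial.eval_smul, bern_eval,
    Polynomial.eval_mul, Polynomial.eval_natCast, Polynomial.eval_X, nsmul_eq_mul] at this
  rw [← this]
  exact Finset.sum_congr rfl fun k _ => by ring

lemma cast_mul_pred (k : ℕ) : ((k * (k - 1) : ℕ) : ℝ) = (k : ℝ) ^ 2 - k := by
  cases k with
  | zero => simp
  | succ j => push_cast [Nat.succ_sub_one]; ring

lemma bsum2 (n : ℕ) (θ : ℝ) :
    ∑ k ∈ Finset.range (n + 1),
      (n.choose k : ℝ) * θ ^ k * (1 - θ) ^ (n - k) * ((k : ℝ) ^ 2 - k)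
      = ((n : ℝ) ^ 2 - n) * θ ^ 2 := by
  have := congrArg (Polynomial.eval θ) (bernsteinPolynomial.sum_mul_smul ℝ n)
  simp only [Polynomial.eval_finset_sum, Polynomial.eval_smul, bern_eval,
    Polynomial.eval_mul, Polynomial.eval_natCast, Polynomial.eval_pow, Polynomial.eval_X, nsmul_eq_mul] at this
  rw [show ((n:ℝ)^2 - n) * θ^2 = ((n * (n-1) : ℕ) : ℝ) * θ^2 by rw [cast_mul_pred], ← this]
  exact Finset.sum_congr rfl fun k _ => by rw [← cast_mul_pred]; ring

lemma key (n : ℕ) (θ : ℝ) (h0 : 0 ≤ θ) (h1 : θ ≤ 1) :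
    ∑ k ∈ Finset.range (n + 1),
      (n.choose k : ℝ) * θ ^ k * (1 - θ) ^ (n - k) * (((n - k : ℕ) : ℝ) ^ 2 + (k : ℝ) ^ 2)
      ≤ ((n : ℝ) + 1) ^ 2 * (θ ^ 2 + (1 - θ) ^ 2) := by
  have e : ∑ k ∈ Finset.range (n + 1),
      (n.choose k : ℝ) * θ ^ k * (1 - θ) ^ (n - k) * (((n - k : ℕ) : ℝ) ^ 2 + (k : ℝ) ^ 2)
      = (n : ℝ) ^ 2 * (∑ k ∈ Finset.range (n + 1),
          (n.choose k : ℝ) * θ ^ k * (1 - θ) ^ (n - k))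
        + (2 - 2 * (n : ℝ)) * (∑ k ∈ Finset.range (n + 1),
          (n.choose k : ℝ) * θ ^ k * (1 - θ) ^ (n - k) * (k : ℝ))
        + 2 * (∑ k ∈ Finset.range (n + 1),
          (n.choose k : ℝ) * θ ^ k * (1 - θ) ^ (n - k) * ((k : ℝ) ^ 2 - k)) := by
    rw [Finset.mul_sum, Finset.mul_sum, Finset.mul_sum, ← Finset.sum_add_distrib,
      ← Finset.sum_add_distrib]
    refine Finset.sum_congr rfl fun k hk => ?_
    have hkn : k ≤ n := Nat.lt_succ_iff.mp (Finset.mem_range.mp hk)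
    have : ((n - k : ℕ) : ℝ) = (n : ℝ) - k := by
      push_cast [Nat.cast_sub hkn]; ring
    rw [this]; ring
  rw [e, bsum0, bsum1, bsum2]
  have hn : (0:ℝ) ≤ n := Nat.cast_nonneg n
  nlinarith [mul_nonneg hn (sq_nonneg (2 * θ - 1)), sq_nonneg (2 * θ - 1)]

theorem stmt0 (μ : Measure ℝ) [IsProbabilityMeasure μ]
    (hsupp : μ (Set.Icc (0:ℝ) 1)ᶜ = 0)
    (C₀ ε : ℝ) (hC₀ : 0 ≤ C₀) (hε0 : 0 ≤ ε) (hε1 : ε < 1)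
    (ahat : ℝ) (hahat : ahat = (1 + ε) * ∫ θ, (θ ^ 2 + (1 - θ) ^ 2) ∂μ)
    (hahat1 : ahat < 1)
    (f : ℕ → ℝ) (hf0 : f 0 = 0)
    (hfrec : ∀ ℓ : ℕ, 1 ≤ ℓ →
      f ℓ ≤ C₀ * (ℓ : ℝ) ^ 2 + (1 + ε) * binExp μ ℓ (fun k => f (ℓ - 1 - k) + f k)) :
    ∀ ℓ : ℕ, f ℓ ≤ C₀ * (2 / (1 - ahat)) * (ℓ : ℝ) ^ 2 := by
  have hA1 : (0:ℝ) < 1 - ahat := by linarith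
  set A : ℝ := 2 / (1 - ahat) with hAdef
  have hApos : 0 < A := by positivity
  have hAeq : A * (1 - ahat) = 2 := by
    rw [hAdef]; exact div_mul_cancel₀ 2 hA1.ne'
  have hae : ∀ᵐ θ ∂μ, θ ∈ Set.Icc (0:ℝ) 1 := by
    rw [ae_iff]
    exact hsupp
  intro ℓ
  induction ℓ using Nat.strong_induction_on with
  | _ ℓ ih =>
    cases ℓ with
    | zero => simp [hf0]
    | succ n =>
      -- notation
      set g : ℕ → ℝ := fun k => f (n + 1 - 1 - k) + f k with hg
      set W : ℝ → ℝ := fun θ => ∑ k ∈ Finset.range (n + 1),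
        (n.choose k : ℝ) * θ ^ k * (1 - θ) ^ (n - k) * g k with hW
      have hbin : binExp μ (n + 1) g = ∫ θ, W θ ∂μ := by
        simp only [binExp, hW, Nat.add_sub_cancel]
      -- pointwise bound
      have hpt : ∀ θ ∈ Set.Icc (0:ℝ) 1,
          W θ ≤ C₀ * A * ((n : ℝ) + 1) ^ 2 * (θ ^ 2 + (1 - θ) ^ 2) := by
        intro θ hθ
        obtain ⟨h0, h1⟩ := hθ
        have step1 : W θ ≤ ∑ k ∈ Finset.range (n + 1),
            (n.choose k : ℝ) * θ ^ k * (1 - θ) ^ (n - k) *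
              (C₀ * A * (((n - k : ℕ) : ℝ) ^ 2 + (k : ℝ) ^ 2)) := by
          refine Finset.sum_le_sum fun k hk => ?_
          have hw : (0:ℝ) ≤ (n.choose k : ℝ) * θ ^ k * (1 - θ) ^ (n - k) := by
            have : (0:ℝ) ≤ 1 - θ := by linarith
            positivity
          refine mul_le_mul_of_nonneg_left ?_ hw
          have hk1 : k < n + 1 := Finset.mem_range.mp hk
          have e1 : n + 1 - 1 - k = n - k := by omega
          have h2 : f (n - k) ≤ C₀ * A * ((n - k : ℕ) : ℝ) ^ 2 :=
            ih (n - k) (by omega)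
          have h3 : f k ≤ C₀ * A * (k : ℝ) ^ 2 := ih k hk1
          simp only [hg, e1]
          nlinarith
        have step2 : ∑ k ∈ Finset.range (n + 1),
            (n.choose k : ℝ) * θ ^ k * (1 - θ) ^ (n - k) *
              (C₀ * A * (((n - k : ℕ) : ℝ) ^ 2 + (k : ℝ) ^ 2))
            = C₀ * A * ∑ k ∈ Finset.range (n + 1),
              (n.choose k : ℝ) * θ ^ k * (1 - θ) ^ (n - k) *
                (((n - k : ℕ) : ℝ) ^ 2 + (k : ℝ) ^ 2) := by
          rw [Finset.mul_sum]; exact Finset.sum_congr rfl fun k _ => by ring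
        have step3 := key n θ h0 h1
        have hCA : (0:ℝ) ≤ C₀ * A := by positivity
        calc W θ ≤ _ := step1
          _ = _ := step2
          _ ≤ C₀ * A * (((n : ℝ) + 1) ^ 2 * (θ ^ 2 + (1 - θ) ^ 2)) :=
            mul_le_mul_of_nonneg_left step3 hCA
          _ = C₀ * A * ((n : ℝ) + 1) ^ 2 * (θ ^ 2 + (1 - θ) ^ 2) := by ring
      -- integrability of W
      have hWcont : Continuous W := by
        apply continuous_finset_sum
        intro k _
        fun_prop
      have hWint : Integrable W μ := by
        refine Integrable.mono' (integrable_const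
          (∑ k ∈ Finset.range (n + 1), (n.choose k : ℝ) * |g k|))
          hWcont.aestronglyMeasurable (hae.mono fun θ hθ => ?_)
        obtain ⟨h0, h1⟩ := hθ
        have h01 : (0:ℝ) ≤ 1 - θ := by linarith
        calc ‖W θ‖ ≤ ∑ k ∈ Finset.range (n + 1),
              |(n.choose k : ℝ) * θ ^ k * (1 - θ) ^ (n - k) * g k| :=
            Finset.abs_sum_le_sum_abs _ _
          _ ≤ ∑ k ∈ Finset.range (n + 1), (n.choose k : ℝ) * |g k| := by
            refine Finset.sum_le_sum fun k _ => ?_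
            rw [abs_mul, abs_mul, abs_mul, abs_of_nonneg (by positivity : (0:ℝ) ≤ (n.choose k:ℝ)),
              abs_of_nonneg (by positivity : (0:ℝ) ≤ θ ^ k),
              abs_of_nonneg (by positivity : (0:ℝ) ≤ (1 - θ) ^ (n - k))]
            have e1 : θ ^ k ≤ 1 := pow_le_one₀ h0 h1
            have e2 : (1 - θ) ^ (n - k) ≤ 1 := pow_le_one₀ h01 (by linarith)
            calc (n.choose k : ℝ) * θ ^ k * (1 - θ) ^ (n - k) * |g k|
                ≤ (n.choose k : ℝ) * 1 * 1 * |g k| := by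
                  gcongr
              _ = (n.choose k : ℝ) * |g k| := by ring
      -- integrability of the majorant
      have hQint : Integrable (fun θ : ℝ => C₀ * A * ((n : ℝ) + 1) ^ 2 *
          (θ ^ 2 + (1 - θ) ^ 2)) μ := by
        refine Integrable.mono' (integrable_const (C₀ * A * ((n : ℝ) + 1) ^ 2 * 2))
          (Continuous.aestronglyMeasurable (by continuity)) (hae.mono fun θ hθ => ?_)
        obtain ⟨h0, h1⟩ := hθ
        have hCA : (0:ℝ) ≤ C₀ * A * ((n : ℝ) + 1) ^ 2 := by positivity
        have hq2 : θ ^ 2 + (1 - θ) ^ 2 ≤ 2 := by nlinarith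
        rw [Real.norm_eq_abs, abs_of_nonneg (by positivity)]
        exact mul_le_mul_of_nonneg_left hq2 hCA
      have hint : ∫ θ, W θ ∂μ ≤ C₀ * A * ((n : ℝ) + 1) ^ 2 *
          ∫ θ, (θ ^ 2 + (1 - θ) ^ 2) ∂μ := by
        rw [← MeasureTheory.integral_const_mul]
        exact integral_mono_ae hWint hQint (hae.mono fun θ hθ => hpt θ hθ)
      have h1ε : (0:ℝ) < 1 + ε := by linarith
      have hmain := hfrec (n + 1) (by omega)
      rw [hbin] at hmain
      have h4 : (1 + ε) * ∫ θ, W θ ∂μ ≤ C₀ * A * ((n : ℝ) + 1) ^ 2 * ahat := by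
        calc (1 + ε) * ∫ θ, W θ ∂μ
            ≤ (1 + ε) * (C₀ * A * ((n : ℝ) + 1) ^ 2 * ∫ θ, (θ ^ 2 + (1 - θ) ^ 2) ∂μ) :=
              mul_le_mul_of_nonneg_left hint (le_of_lt h1ε)
          _ = C₀ * A * ((n : ℝ) + 1) ^ 2 * ahat := by rw [hahat]; ring
      have hcast : ((n + 1 : ℕ) : ℝ) = (n : ℝ) + 1 := by push_cast; ring
      rw [hcast] at hmain ⊢
      have hs : (0:ℝ) ≤ C₀ * ((n : ℝ) + 1) ^ 2 := mul_nonneg hC₀ (sq_nonneg _)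
      have e : C₀ * A * ((n : ℝ) + 1) ^ 2 -
          (C₀ * ((n : ℝ) + 1) ^ 2 + C₀ * A * ((n : ℝ) + 1) ^ 2 * ahat)
          = C₀ * ((n : ℝ) + 1) ^ 2 * (A * (1 - ahat) - 1) := by ring
      rw [hAeq] at e
      linarith [hmain, h4, hs, e]
end

section
/- Let Π be a Borel probability measure on [0,1] with h := E_{Θ~Π}[H_B(Θ)] > 0, and let Δ : ℕ → ℝ be the unique function with Δ(0) = 1 and, for ℓ ≥ 1, Δ(ℓ) = 1 + E[Δ(Γ_ℓ)]. Then there exists a finite constant C* (depending only on Π) such that |Δ(ℓ) - (1/h)·log₂ ℓ| ≤ C* for all ℓ ≥ 1. -/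
open MeasureTheory

/-- Binary entropy `H_B(p) = -p log₂ p - (1-p) log₂ (1-p)` (with `0 log 0 = 0`). -/
noncomputable def binEnt (p : ℝ) : ℝ :=
  -(p * Real.logb 2 p) - (1 - p) * Real.logb 2 (1 - p)

/-- Expectation of `g (Γ_ℓ)` where `θ ~ μ` and, conditionally on `θ`, `Γ_ℓ` is
`Binomial(ℓ-1, θ)` with probability `θ` and `Binomial(ℓ-1, 1-θ)` with probability `1-θ`. -/
noncomputable def gammaExp (μ : Measure ℝ) (ℓ : ℕ) (g : ℕ → ℝ) : ℝ :=
  ∫ θ, (θ * ∑ k ∈ Finset.range ℓ,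
          ((ℓ - 1).choose k : ℝ) * θ ^ k * (1 - θ) ^ (ℓ - 1 - k) * g k
      + (1 - θ) * ∑ k ∈ Finset.range ℓ,
          ((ℓ - 1).choose k : ℝ) * (1 - θ) ^ k * θ ^ (ℓ - 1 - k) * g k) ∂μ

open Finset

noncomputable def Sb (n : ℕ) (p : ℝ) (g : ℕ → ℝ) : ℝ :=
  ∑ k ∈ range (n+1), (n.choose k : ℝ) * p^k * (1-p)^(n-k) * g k

lemma sumW (n : ℕ) (p : ℝ) : ∑ k ∈ range (n+1), (n.choose k : ℝ) * p^k * (1-p)^(n-k) = 1 := by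
  have h := add_pow p (1-p) n
  have : ∑ k ∈ range (n+1), (n.choose k : ℝ) * p^k * (1-p)^(n-k)
      = ∑ k ∈ range (n+1), p^k * (1-p)^(n-k) * (n.choose k : ℝ) := by
    apply Finset.sum_congr rfl; intros; ring
  rw [this, ← h]; norm_num

lemma Sb_const (n : ℕ) (p : ℝ) (c : ℝ) : Sb n p (fun _ => c) = c := by
  have := sumW n p
  calc Sb n p (fun _ => c)
      = (∑ k ∈ range (n+1), (n.choose k : ℝ) * p^k * (1-p)^(n-k)) * c := by
        rw [Finset.sum_mul]; apply Finset.sum_congr rfl; intros; ring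
    _ = c := by rw [this]; ring

lemma Sb_add (n : ℕ) (p : ℝ) (g g' : ℕ → ℝ) :
    Sb n p (fun k => g k + g' k) = Sb n p g + Sb n p g' := by
  unfold Sb; rw [← Finset.sum_add_distrib]; apply Finset.sum_congr rfl; intros; ring

lemma Sb_smul (n : ℕ) (p : ℝ) (c : ℝ) (g : ℕ → ℝ) :
    Sb n p (fun k => c * g k) = c * Sb n p g := by
  unfold Sb; rw [Finset.mul_sum]; apply Finset.sum_congr rfl; intros; ring

lemma Sb_mono (n : ℕ) {p : ℝ} (hp0 : 0 ≤ p) (hp1 : p ≤ 1) {g g' : ℕ → ℝ}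
    (hg : ∀ k, k ≤ n → g k ≤ g' k) : Sb n p g ≤ Sb n p g' := by
  apply Finset.sum_le_sum
  intro k hk
  have hk' : k ≤ n := Nat.lt_succ_iff.mp (Finset.mem_range.mp hk)
  have hq : (0:ℝ) ≤ 1 - p := by linarith
  have w : (0:ℝ) ≤ (n.choose k : ℝ) * p^k * (1-p)^(n-k) := by positivity
  exact mul_le_mul_of_nonneg_left (hg k hk') w

lemma Sb_k (n : ℕ) (p : ℝ) : Sb n p (fun k => (k:ℝ)) = n * p := by
  cases n with
  | zero => simp [Sb]
  | succ m =>
    unfold Sb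
    rw [Finset.sum_range_succ']
    have key : ∀ k, ((m+1).choose (k+1) : ℝ) * ((k:ℝ)+1) = ((m:ℝ)+1) * (m.choose k : ℝ) := by
      intro k
      have := Nat.add_one_mul_choose_eq m k
      have : ((m.succ * m.choose k : ℕ) : ℝ) = ((m.succ.choose k.succ * k.succ : ℕ) : ℝ) := by
        exact_mod_cast congrArg Nat.cast this
      push_cast at this
      push_cast
      linarith
    have : ∑ k ∈ range (m+1), ((m+1).choose (k+1) : ℝ) * p^(k+1) * (1-p)^(m+1-(k+1)) * ((k+1 : ℕ):ℝ)
        = ((m:ℝ)+1) * p * ∑ k ∈ range (m+1), (m.choose k : ℝ) * p^k * (1-p)^(m-k) := by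
      rw [Finset.mul_sum]
      apply Finset.sum_congr rfl
      intro k hk
      have hle : k ≤ m := by simpa using Nat.lt_succ_iff.mp (Finset.mem_range.mp hk)
      have h1 : m + 1 - (k+1) = m - k := by omega
      rw [h1]
      have hck := key k
      push_cast
      linear_combination (p^(k+1) * (1-p)^(m-k)) * hck
    rw [this, sumW]
    push_cast
    ring

lemma Sb_inv (n : ℕ) (p : ℝ) :
    ((n:ℝ)+1) * p * Sb n p (fun k => 1/((k:ℝ)+1)) = 1 - (1-p)^(n+1) := by
  unfold Sb
  have key : ∀ k : ℕ, ((n:ℝ)+1) * p * ((n.choose k : ℝ) * p^k * (1-p)^(n-k) * (1/((k:ℝ)+1)))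
      = ((n+1).choose (k+1) : ℝ) * p^(k+1) * (1-p)^(n+1-(k+1)) := by
    intro k
    have h := Nat.add_one_mul_choose_eq n k
    have h' : ((n:ℝ)+1) * (n.choose k : ℝ) = ((n+1).choose (k+1) : ℝ) * ((k:ℝ)+1) := by
      exact_mod_cast congrArg (Nat.cast (R := ℝ)) h
    have h1 : n + 1 - (k+1) = n - k := by omega
    rw [h1]
    have hk1 : ((k:ℝ)+1) ≠ 0 := by positivity
    field_simp
    linear_combination (p^(k+1) * (1-p)^(n-k)) * h' 
  rw [Finset.mul_sum]
  rw [Finset.sum_congr rfl (fun k _ => key k)]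
  have hs := sumW (n+1) p
  rw [Finset.sum_range_succ'] at hs
  simp only [Nat.choose_zero_right, pow_zero, Nat.cast_one, one_mul, Nat.sub_zero, mul_one] at hs
  have hc : ∑ k ∈ range (n+1), ((n+1).choose (k+1) : ℝ) * p^(k+1) * (1-p)^(n+1-(k+1))
      = ∑ k ∈ range (n+1), ((n+1).choose (k+1) : ℝ) * p^(k+1) * (1-p)^(n-k) := by
    apply Finset.sum_congr rfl; intro k hk
    have : n + 1 - (k+1) = n - k := by omega
    rw [this]
  rw [hc]
  linarith


noncomputable def glog : ℕ → ℝ := fun k => Real.logb 2 ((k:ℝ)+1)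
noncomputable def ginv : ℕ → ℝ := fun k => 1/((k:ℝ)+1)

lemma log2pos : (0:ℝ) < Real.log 2 := Real.log_pos (by norm_num)

/-- Jensen-type upper bound via tangent line at t = np+1. -/
lemma Sb_log_le (n : ℕ) {p : ℝ} (hp0 : 0 ≤ p) (hp1 : p ≤ 1) :
    Sb n p glog ≤ Real.logb 2 ((n:ℝ)*p+1) := by
  have hLpos := log2pos
  set L := Real.log 2 with hL
  set t : ℝ := (n:ℝ)*p+1 with ht
  have htpos : 0 < t := by positivity
  have key : ∀ k : ℕ, glog k ≤ (Real.logb 2 t + (1-t)/(t*L)) + (1/(t*L)) * (k:ℝ) := by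
    intro k
    have hk1 : (0:ℝ) < (k:ℝ)+1 := by positivity
    have hr : (0:ℝ) < ((k:ℝ)+1)/t := by positivity
    have hlog := Real.log_le_sub_one_of_pos hr
    rw [Real.log_div (by positivity) (by positivity)] at hlog
    have h2 : Real.log ((k:ℝ)+1) - Real.log t ≤ ((k:ℝ)+1-t)/t := by
      have : ((k:ℝ)+1)/t - 1 = ((k:ℝ)+1-t)/t := by field_simp
      linarith
    have h3 : (Real.log ((k:ℝ)+1) - Real.log t)/L ≤ (((k:ℝ)+1-t)/t)/L := by gcongr
    rw [sub_div] at h3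
    have h4 : (Real.logb 2 t + (1-t)/(t*L)) + (1/(t*L)) * (k:ℝ)
        = Real.log t / L + (((k:ℝ)+1-t)/t)/L := by
      rw [Real.logb]; field_simp; ring
    unfold glog
    simp only [Real.logb, ← hL] at h4 ⊢
    linarith
  have hmono := Sb_mono n hp0 hp1 (g := glog)
      (g' := fun k => (Real.logb 2 t + (1-t)/(t*L)) + (1/(t*L)) * (k:ℝ)) (fun k _ => key k)
  have haff : Sb n p (fun k => (Real.logb 2 t + (1-t)/(t*L)) + (1/(t*L)) * (k:ℝ))
      = (Real.logb 2 t + (1-t)/(t*L)) + (1/(t*L)) * ((n:ℝ)*p) := by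
    rw [Sb_add n p (fun _ => Real.logb 2 t + (1-t)/(t*L)) (fun k => (1/(t*L)) * (k:ℝ)),
        Sb_const, Sb_smul, Sb_k]
  rw [haff] at hmono
  have hz : (1-t)/(t*L) + (1/(t*L)) * ((n:ℝ)*p) = 0 := by
    rw [ht]; field_simp; ring
  linarith

/-- Lower bound via tangent from below at t = (n+1)p. -/
lemma Sb_log_ge (n : ℕ) {p : ℝ} (hp0 : 0 < p) (hp1 : p ≤ 1) :
    Real.logb 2 (((n:ℝ)+1)*p) ≤ Sb n p glog := by
  have hLpos := log2pos
  set L := Real.log 2 with hL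
  set t : ℝ := ((n:ℝ)+1)*p with ht
  have htpos : 0 < t := by positivity
  have key : ∀ k : ℕ, (Real.logb 2 t + 1/L) + (-(t/L)) * ginv k ≤ glog k := by
    intro k
    have hk1 : (0:ℝ) < (k:ℝ)+1 := by positivity
    have hr : (0:ℝ) < t/((k:ℝ)+1) := by positivity
    have hlog := Real.log_le_sub_one_of_pos hr
    rw [Real.log_div (by positivity) (by positivity)] at hlog
    have h2 : (Real.log t - Real.log ((k:ℝ)+1))/L ≤ (t/((k:ℝ)+1) - 1)/L := by gcongr
    rw [sub_div] at h2
    have h4 : (Real.logb 2 t + 1/L) + (-(t/L)) * ginv k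
        = Real.log t / L - (t/((k:ℝ)+1) - 1)/L + (Real.log ((k:ℝ)+1))/L
          - (Real.log ((k:ℝ)+1))/L := by
      unfold ginv
      rw [Real.logb]; field_simp; ring
    unfold glog
    simp only [Real.logb, ← hL] at h4 ⊢
    linarith
  have hmono := Sb_mono n hp0.le hp1
      (g := fun k => (Real.logb 2 t + 1/L) + (-(t/L)) * ginv k) (g' := glog) (fun k _ => key k)
  have haff : Sb n p (fun k => (Real.logb 2 t + 1/L) + (-(t/L)) * ginv k)
      = (Real.logb 2 t + 1/L) + (-(t/L)) * Sb n p ginv := by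
    rw [Sb_add n p (fun _ => Real.logb 2 t + 1/L) (fun k => (-(t/L)) * ginv k),
        Sb_const, Sb_smul]
  have hinv : t * Sb n p ginv = 1 - (1-p)^(n+1) := by
    have h5 := Sb_inv n p
    unfold ginv
    rw [ht]; linarith
  have hq : (0:ℝ) ≤ (1-p)^(n+1) := by
    have : (0:ℝ) ≤ 1 - p := by linarith
    positivity
  have h6 : (-(t/L)) * Sb n p ginv = -((1 - (1-p)^(n+1))/L) := by
    rw [neg_mul, div_mul_eq_mul_div, hinv]
  rw [haff, h6] at hmono
  have h7 : 1/L - (1 - (1-p)^(n+1))/L = (1-p)^(n+1)/L := by field_simp; ring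
  have h8 : 0 ≤ (1-p)^(n+1)/L := by positivity
  linarith

noncomputable def Eg (n : ℕ) (θ : ℝ) (g : ℕ → ℝ) : ℝ :=
  θ * Sb n θ g + (1-θ) * Sb n (1-θ) g

lemma Eg_const (n : ℕ) (θ : ℝ) (c : ℝ) : Eg n θ (fun _ => c) = c := by
  unfold Eg; rw [Sb_const, Sb_const]; ring

lemma Eg_add (n : ℕ) (θ : ℝ) (g g' : ℕ → ℝ) :
    Eg n θ (fun k => g k + g' k) = Eg n θ g + Eg n θ g' := by
  unfold Eg; rw [Sb_add, Sb_add]; ring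

lemma Eg_smul (n : ℕ) (θ : ℝ) (c : ℝ) (g : ℕ → ℝ) :
    Eg n θ (fun k => c * g k) = c * Eg n θ g := by
  unfold Eg; rw [Sb_smul, Sb_smul]; ring

lemma Eg_mono (n : ℕ) {θ : ℝ} (hθ : θ ∈ Set.Icc (0:ℝ) 1) {g g' : ℕ → ℝ}
    (hg : ∀ k, k ≤ n → g k ≤ g' k) : Eg n θ g ≤ Eg n θ g' := by
  obtain ⟨h0, h1⟩ := hθ
  have h1' : (0:ℝ) ≤ 1 - θ := by linarith
  have hA := Sb_mono n h0 h1 hg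
  have hB := Sb_mono n h1' (by linarith) hg
  unfold Eg
  have := mul_le_mul_of_nonneg_left hA h0
  have := mul_le_mul_of_nonneg_left hB h1'
  linarith

lemma branchU (n : ℕ) {p : ℝ} (hp0 : 0 ≤ p) (hp1 : p ≤ 1) :
    p * Real.logb 2 ((n:ℝ)*p+1) ≤ p * Real.logb 2 ((n:ℝ)+2) + p * Real.logb 2 p
      + 1/(((n:ℝ)+2) * Real.log 2) := by
  have hLpos := log2pos
  rcases eq_or_lt_of_le hp0 with h | hp
  · rw [← h]; simp
    positivity
  · have hn2 : (0:ℝ) < (n:ℝ)+2 := by positivity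
    have hr : (0:ℝ) < ((n:ℝ)*p+1)/(((n:ℝ)+2)*p) := by positivity
    have hlog := Real.log_le_sub_one_of_pos hr
    rw [Real.log_div (by positivity) (by positivity)] at hlog
    have hD : (0:ℝ) < ((n:ℝ)+2)*p := by positivity
    have hratio : ((n:ℝ)*p+1)/(((n:ℝ)+2)*p) - 1 ≤ 1/(((n:ℝ)+2)*p) := by
      have he : ((n:ℝ)*p+1)/(((n:ℝ)+2)*p) - 1 = (1-2*p)/(((n:ℝ)+2)*p) := by
        field_simp; ring
      rw [he]
      exact (div_le_div_iff_of_pos_right hD).mpr (by linarith)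
    have hsplit : Real.log (((n:ℝ)+2)*p) = Real.log ((n:ℝ)+2) + Real.log p :=
      Real.log_mul (by positivity) (ne_of_gt hp)
    have hmain : Real.log ((n:ℝ)*p+1) ≤ Real.log ((n:ℝ)+2) + Real.log p + 1/(((n:ℝ)+2)*p) := by
      linarith
    have hdiv : Real.log ((n:ℝ)*p+1) / Real.log 2
        ≤ (Real.log ((n:ℝ)+2) + Real.log p + 1/(((n:ℝ)+2)*p)) / Real.log 2 := by gcongr
    have hmulp := mul_le_mul_of_nonneg_left hdiv hp0
    simp only [Real.logb]
    calc p * (Real.log ((n:ℝ)*p+1) / Real.log 2)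
        ≤ p * ((Real.log ((n:ℝ)+2) + Real.log p + 1/(((n:ℝ)+2)*p)) / Real.log 2) := hmulp
      _ = p * (Real.log ((n:ℝ)+2)/Real.log 2) + p * (Real.log p/Real.log 2)
          + 1/(((n:ℝ)+2) * Real.log 2) := by
          field_simp

lemma branchL (n : ℕ) {p : ℝ} (hp0 : 0 ≤ p) (hp1 : p ≤ 1) :
    p * Real.logb 2 ((n:ℝ)+1) + p * Real.logb 2 p ≤ p * Sb n p glog := by
  rcases eq_or_lt_of_le hp0 with h | hp
  · rw [← h]; simp
  · have h1 := Sb_log_ge n hp hp1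
    have hsplit : Real.logb 2 (((n:ℝ)+1)*p) = Real.logb 2 ((n:ℝ)+1) + Real.logb 2 p :=
      Real.logb_mul (by positivity) (ne_of_gt hp)
    rw [hsplit] at h1
    nlinarith

lemma Eg_log_le (n : ℕ) {θ : ℝ} (hθ : θ ∈ Set.Icc (0:ℝ) 1) :
    Eg n θ glog ≤ Real.logb 2 ((n:ℝ)+2) - binEnt θ + 2/(((n:ℝ)+2) * Real.log 2) := by
  obtain ⟨h0, h1⟩ := hθ
  have h0' : (0:ℝ) ≤ 1 - θ := by linarith
  have h1' : 1 - θ ≤ 1 := by linarith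
  have hA := mul_le_mul_of_nonneg_left (Sb_log_le n h0 h1) h0
  have hB := mul_le_mul_of_nonneg_left (Sb_log_le n h0' h1') h0'
  have hUA := branchU n h0 h1
  have hUB := branchU n h0' h1'
  unfold Eg binEnt
  ring_nf at hA hB hUA hUB ⊢
  linarith

lemma Eg_log_ge (n : ℕ) {θ : ℝ} (hθ : θ ∈ Set.Icc (0:ℝ) 1) :
    Real.logb 2 ((n:ℝ)+1) - binEnt θ ≤ Eg n θ glog := by
  obtain ⟨h0, h1⟩ := hθ
  have h0' : (0:ℝ) ≤ 1 - θ := by linarith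
  have h1' : 1 - θ ≤ 1 := by linarith
  have hA := branchL n h0 h1
  have hB := branchL n h0' h1'
  unfold Eg binEnt
  ring_nf at hA hB ⊢
  linarith

lemma Eg_inv_eq (n : ℕ) (θ : ℝ) :
    ((n:ℝ)+1) * Eg n θ ginv = 2 - θ^(n+1) - (1-θ)^(n+1) := by
  have hA := Sb_inv n θ
  have hB := Sb_inv n (1-θ)
  rw [sub_sub_cancel] at hB
  unfold Eg ginv
  linear_combination hA + hB

lemma Eg_inv_ge (n : ℕ) (hn : 1 ≤ n) {θ : ℝ} (hθ : θ ∈ Set.Icc (0:ℝ) 1) :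
    (1 + 2*θ*(1-θ))/((n:ℝ)+1) ≤ Eg n θ ginv := by
  obtain ⟨h0, h1⟩ := hθ
  have h0' : (0:ℝ) ≤ 1 - θ := by linarith
  have hA : θ^(n+1) ≤ θ^2 := pow_le_pow_of_le_one h0 h1 (by omega)
  have hB : (1-θ)^(n+1) ≤ (1-θ)^2 := pow_le_pow_of_le_one h0' (by linarith) (by omega)
  have hEq := Eg_inv_eq n θ
  have hn1 : (0:ℝ) < (n:ℝ)+1 := by positivity
  rw [div_le_iff₀ hn1]
  nlinarith

lemma Eg_inv_le (n : ℕ) {θ : ℝ} (hθ : θ ∈ Set.Icc (0:ℝ) 1) :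
    Eg n θ ginv ≤ 2/((n:ℝ)+1) := by
  obtain ⟨h0, h1⟩ := hθ
  have h0' : (0:ℝ) ≤ 1 - θ := by linarith
  have hA : 0 ≤ θ^(n+1) := by positivity
  have hB : 0 ≤ (1-θ)^(n+1) := by positivity
  have hEq := Eg_inv_eq n θ
  have hn1 : (0:ℝ) < (n:ℝ)+1 := by positivity
  rw [le_div_iff₀ hn1]
  nlinarith

lemma Eg_continuous (n : ℕ) (g : ℕ → ℝ) : Continuous (fun θ : ℝ => Eg n θ g) := by
  unfold Eg Sb
  fun_prop

lemma Sb_abs_le (n : ℕ) {p : ℝ} (hp0 : 0 ≤ p) (hp1 : p ≤ 1) (g : ℕ → ℝ) :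
    |Sb n p g| ≤ ∑ k ∈ range (n+1), (n.choose k : ℝ) * |g k| := by
  have hq : (0:ℝ) ≤ 1 - p := by linarith
  calc |Sb n p g| ≤ ∑ k ∈ range (n+1), |(n.choose k : ℝ) * p^k * (1-p)^(n-k) * g k| :=
        Finset.abs_sum_le_sum_abs _ _
    _ ≤ ∑ k ∈ range (n+1), (n.choose k : ℝ) * |g k| := by
        apply Finset.sum_le_sum
        intro k _
        rw [abs_mul]
        have h1 : |(n.choose k : ℝ) * p^k * (1-p)^(n-k)| ≤ (n.choose k : ℝ) := by
          rw [abs_of_nonneg (by positivity)]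
          have hpk : p^k ≤ 1 := pow_le_one₀ hp0 hp1
          have hqk : (1-p)^(n-k) ≤ 1 := pow_le_one₀ hq (by linarith)
          have hc : (0:ℝ) ≤ (n.choose k : ℝ) := Nat.cast_nonneg _
          have step : (n.choose k : ℝ) * p^k * (1-p)^(n-k) ≤ (n.choose k : ℝ) * 1 * 1 :=
            mul_le_mul (mul_le_mul le_rfl hpk (pow_nonneg hp0 k) hc) hqk
              (pow_nonneg hq _) (by positivity)
          simpa using step
        exact mul_le_mul_of_nonneg_right h1 (abs_nonneg _)

lemma Eg_abs_le (n : ℕ) {θ : ℝ} (hθ : θ ∈ Set.Icc (0:ℝ) 1) (g : ℕ → ℝ) :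
    |Eg n θ g| ≤ ∑ k ∈ range (n+1), (n.choose k : ℝ) * |g k| := by
  obtain ⟨h0, h1⟩ := hθ
  have h0' : (0:ℝ) ≤ 1 - θ := by linarith
  have hA := Sb_abs_le n h0 h1 g
  have hB := Sb_abs_le n h0' (by linarith) g
  unfold Eg
  calc |θ * Sb n θ g + (1-θ) * Sb n (1-θ) g|
      ≤ |θ * Sb n θ g| + |(1-θ) * Sb n (1-θ) g| := abs_add_le _ _
    _ = θ * |Sb n θ g| + (1-θ) * |Sb n (1-θ) g| := by
        rw [abs_mul, abs_mul, abs_of_nonneg h0, abs_of_nonneg h0']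
    _ ≤ θ * (∑ k ∈ range (n+1), (n.choose k : ℝ) * |g k|)
        + (1-θ) * (∑ k ∈ range (n+1), (n.choose k : ℝ) * |g k|) := by
        have := mul_le_mul_of_nonneg_left hA h0
        have := mul_le_mul_of_nonneg_left hB h0'
        linarith
    _ = ∑ k ∈ range (n+1), (n.choose k : ℝ) * |g k| := by ring

section Integrals
variable {μ : Measure ℝ} [IsProbabilityMeasure μ]

lemma ae_Icc (hsupp : μ (Set.Icc (0:ℝ) 1)ᶜ = 0) : ∀ᵐ θ ∂μ, θ ∈ Set.Icc (0:ℝ) 1 := by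
  rw [MeasureTheory.ae_iff]
  convert hsupp using 2
  rfl

lemma integrable_Eg (hsupp : μ (Set.Icc (0:ℝ) 1)ᶜ = 0) (n : ℕ) (g : ℕ → ℝ) :
    Integrable (fun θ => Eg n θ g) μ := by
  apply Integrable.mono' (integrable_const (∑ k ∈ range (n+1), (n.choose k : ℝ) * |g k|))
    (Eg_continuous n g).aestronglyMeasurable
  filter_upwards [ae_Icc hsupp] with θ hθ
  exact Eg_abs_le n hθ g

lemma binEnt_abs_le {θ : ℝ} (hθ : θ ∈ Set.Icc (0:ℝ) 1) : |binEnt θ| ≤ 2 / Real.log 2 := by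
  obtain ⟨h0, h1⟩ := hθ
  have hL := log2pos
  have key : ∀ p : ℝ, 0 ≤ p → p ≤ 1 → -(1/Real.log 2) ≤ -(p * Real.logb 2 p) ∧
      -(p * Real.logb 2 p) ≤ 1/Real.log 2 := by
    intro p hp0 hp1
    rcases eq_or_lt_of_le hp0 with h | hp
    · rw [← h]; simp; positivity
    · have hlogle : Real.log p ≤ p - 1 := Real.log_le_sub_one_of_pos hp
      have hloggr : -Real.log p ≤ 1/p - 1 := by
        have := Real.log_le_sub_one_of_pos (show (0:ℝ) < 1/p by positivity)
        rw [Real.log_div one_ne_zero (ne_of_gt hp), Real.log_one] at this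
        linarith
      have h1' : -(p * Real.logb 2 p) = p * -Real.log p / Real.log 2 := by
        rw [Real.logb]; ring
      constructor
      · rw [h1', show -(1/Real.log 2) = (-1)/Real.log 2 by ring]
        exact (div_le_div_iff_of_pos_right hL).mpr (by nlinarith)
      · rw [h1']
        have hinv : p * (1/p) = 1 := by field_simp
        have hml := mul_le_mul_of_nonneg_left hloggr hp0
        exact (div_le_div_iff_of_pos_right hL).mpr (by nlinarith)
  have k1 := key θ h0 h1
  have k2 := key (1-θ) (by linarith) (by linarith)
  unfold binEnt
  rw [abs_le]
  constructor
  · have : -(2/Real.log 2) = -(1/Real.log 2) + -(1/Real.log 2) := by ring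
    rw [this]
    linarith [k1.1, k1.2, k2.1, k2.2]
  · have : (2:ℝ)/Real.log 2 = 1/Real.log 2 + 1/Real.log 2 := by ring
    rw [this]
    linarith [k1.1, k1.2, k2.1, k2.2]

lemma measurable_binEnt : Measurable binEnt := by
  have hlog := Real.measurable_log
  unfold binEnt Real.logb
  exact ((measurable_id.mul (hlog.div_const _)).neg).sub
    ((measurable_const.sub measurable_id).mul
      ((hlog.comp (measurable_const.sub measurable_id)).div_const _))

lemma integrable_binEnt (hsupp : μ (Set.Icc (0:ℝ) 1)ᶜ = 0) :
    Integrable binEnt μ := by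
  apply Integrable.mono' (integrable_const (2 / Real.log 2))
    measurable_binEnt.aestronglyMeasurable
  filter_upwards [ae_Icc hsupp] with θ hθ
  exact binEnt_abs_le hθ

lemma integrable_q (hsupp : μ (Set.Icc (0:ℝ) 1)ᶜ = 0) :
    Integrable (fun θ : ℝ => θ * (1-θ)) μ := by
  apply Integrable.mono' (integrable_const 1)
    (by fun_prop : Continuous (fun θ : ℝ => θ * (1-θ))).aestronglyMeasurable
  filter_upwards [ae_Icc hsupp] with θ hθ
  obtain ⟨h0, h1⟩ := hθ
  rw [Real.norm_eq_abs, abs_of_nonneg (by nlinarith)]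
  nlinarith

end Integrals

lemma gammaExp_Eg (μ : Measure ℝ) (n : ℕ) (g : ℕ → ℝ) :
    gammaExp μ (n+1) g = ∫ θ, Eg n θ g ∂μ := by
  unfold gammaExp Eg Sb
  simp only [Nat.add_sub_cancel, sub_sub_cancel]

lemma Eg_zero (θ : ℝ) (g : ℕ → ℝ) : Eg 0 θ g = g 0 := by
  unfold Eg Sb
  simp
  ring

lemma gammaExp_one (μ : Measure ℝ) [IsProbabilityMeasure μ] (g : ℕ → ℝ) :
    gammaExp μ 1 g = g 0 := by
  rw [show (1:ℕ) = 0 + 1 from rfl, gammaExp_Eg]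
  simp only [Eg_zero]
  simp

lemma gammaExp_mono (μ : Measure ℝ) [IsProbabilityMeasure μ]
    (hsupp : μ (Set.Icc (0:ℝ) 1)ᶜ = 0) (n : ℕ) {g g' : ℕ → ℝ}
    (hg : ∀ k, k ≤ n → g k ≤ g' k) : gammaExp μ (n+1) g ≤ gammaExp μ (n+1) g' := by
  rw [gammaExp_Eg, gammaExp_Eg]
  apply integral_mono_ae (integrable_Eg hsupp n g) (integrable_Eg hsupp n g')
  filter_upwards [ae_Icc hsupp] with θ hθ
  exact Eg_mono n hθ hg

noncomputable def Phi (a K : ℝ) : ℕ → ℝ := fun k => a * glog k + ((-K) * ginv k + (K+1))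
noncomputable def Psi (a K : ℝ) : ℕ → ℝ := fun k => a * glog k + (K * ginv k + (-K))

lemma Eg_affine (n : ℕ) (θ a b c : ℝ) :
    Eg n θ (fun k => a * glog k + (b * ginv k + c)) =
      a * Eg n θ glog + (b * Eg n θ ginv + c) := by
  rw [Eg_add n θ (fun k => a * glog k) (fun k => b * ginv k + c),
    Eg_add n θ (fun k => b * ginv k) (fun _ => c), Eg_smul, Eg_smul, Eg_const]

lemma logb_diff_le {x : ℝ} (hx : 1 ≤ x) :
    Real.logb 2 (x+1) - Real.logb 2 x ≤ 1/(x * Real.log 2) := by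
  have hL := log2pos
  have hx0 : (0:ℝ) < x := by linarith
  have hr : (0:ℝ) < (x+1)/x := by positivity
  have hlog := Real.log_le_sub_one_of_pos hr
  rw [Real.log_div (by positivity) (by positivity)] at hlog
  have h2 : Real.log (x+1) - Real.log x ≤ 1/x := by
    have : (x+1)/x - 1 = 1/x := by field_simp; ring
    linarith
  have h3 : (Real.log (x+1) - Real.log x)/Real.log 2 ≤ (1/x)/Real.log 2 := by gcongr
  rw [sub_div] at h3
  simp only [Real.logb]
  calc Real.log (x+1)/Real.log 2 - Real.log x/Real.log 2 ≤ (1/x)/Real.log 2 := h3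
    _ = 1/(x * Real.log 2) := by rw [div_div]

section Steps
variable {μ : Measure ℝ} [IsProbabilityMeasure μ]

lemma step_up (hsupp : μ (Set.Icc (0:ℝ) 1)ᶜ = 0) {h m a K : ℝ}
    (hh : ∫ θ, binEnt θ ∂μ = h) (hm : ∫ θ, θ*(1-θ) ∂μ = m)
    (hah : a * h = 1) (ha : 0 < a) (hK : 0 < K)
    (hKm : a/Real.log 2 ≤ K * m) (n : ℕ) (hn : 1 ≤ n) :
    gammaExp μ (n+1) (Phi a K) ≤ Phi a K (n+1) - 1 := by
  have hL := log2pos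
  set c₁ : ℝ := a * Real.logb 2 ((n:ℝ)+2) + 2*a/(((n:ℝ)+2)*Real.log 2)
      - K/((n:ℝ)+1) + (K+1) with hc₁
  set c₃ : ℝ := -(2*K/((n:ℝ)+1)) with hc₃
  have hn1 : (0:ℝ) < (n:ℝ)+1 := by positivity
  have hn2 : (0:ℝ) < (n:ℝ)+2 := by positivity
  have hptw : ∀ᵐ θ ∂μ, Eg n θ (Phi a K) ≤ c₁ + ((-a) * binEnt θ + c₃ * (θ*(1-θ))) := by
    filter_upwards [ae_Icc hsupp] with θ hθ
    have e : Eg n θ (Phi a K) = a * Eg n θ glog + ((-K) * Eg n θ ginv + (K+1)) :=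
      Eg_affine n θ a (-K) (K+1)
    have A1 : a * Eg n θ glog
        ≤ a * (Real.logb 2 ((n:ℝ)+2) - binEnt θ + 2/(((n:ℝ)+2)*Real.log 2)) :=
      mul_le_mul_of_nonneg_left (Eg_log_le n hθ) ha.le
    have A2 : K * ((1 + 2*θ*(1-θ))/((n:ℝ)+1)) ≤ K * Eg n θ ginv :=
      mul_le_mul_of_nonneg_left (Eg_inv_ge n hn hθ) hK.le
    rw [e, hc₁, hc₃]
    ring_nf at A1 A2 ⊢
    linarith
  have hintG : Integrable (fun θ => c₁ + ((-a) * binEnt θ + c₃ * (θ*(1-θ)))) μ :=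
    (integrable_const c₁).add
      (((integrable_binEnt hsupp).const_mul (-a)).add ((integrable_q hsupp).const_mul c₃))
  have hIle : gammaExp μ (n+1) (Phi a K) ≤ c₁ + ((-a) * h + c₃ * m) := by
    rw [gammaExp_Eg]
    calc ∫ θ, Eg n θ (Phi a K) ∂μ
        ≤ ∫ θ, (c₁ + ((-a) * binEnt θ + c₃ * (θ*(1-θ)))) ∂μ :=
          integral_mono_ae (integrable_Eg hsupp n _) hintG hptw
      _ = c₁ + ((-a) * h + c₃ * m) := by
          have hint2 : Integrable (fun θ : ℝ => (-a) * binEnt θ + c₃ * (θ*(1-θ))) μ :=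
            ((integrable_binEnt hsupp).const_mul (-a)).add
              ((integrable_q hsupp).const_mul c₃)
          rw [integral_add (integrable_const c₁) hint2,
            integral_add ((integrable_binEnt hsupp).const_mul (-a))
              ((integrable_q hsupp).const_mul c₃),
            integral_const_mul, integral_const_mul, hh, hm]
          simp
  have hPhi : Phi a K (n+1) - 1
      = a * Real.logb 2 ((n:ℝ)+2) + (-K) * (1/((n:ℝ)+2)) + K := by
    unfold Phi glog ginv
    push_cast
    ring_nf
  rw [hPhi]
  have hd1 : K/((n:ℝ)+2) ≤ K/((n:ℝ)+1) :=
    div_le_div_of_nonneg_left hK.le hn1 (by linarith)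
  have e2 : 2*a/(((n:ℝ)+2)*Real.log 2) ≤ 2*(K*m)/((n:ℝ)+1) := by
    have s1 : 2*a/(((n:ℝ)+2)*Real.log 2) ≤ 2*a/(((n:ℝ)+1)*Real.log 2) :=
      div_le_div_of_nonneg_left (by positivity) (by positivity) (by nlinarith)
    have s2 : 2*a/(((n:ℝ)+1)*Real.log 2) = 2*(a/Real.log 2)/((n:ℝ)+1) := by
      field_simp
    have s3 : 2*(a/Real.log 2)/((n:ℝ)+1) ≤ 2*(K*m)/((n:ℝ)+1) :=
      (div_le_div_iff_of_pos_right hn1).mpr (by linarith)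
    rw [s2] at s1
    linarith [s1, s3]
  have hexp : c₃ * m = -(2*(K*m))/((n:ℝ)+1) := by
    rw [hc₃]; ring
  have hKn2 : (-K) * (1/((n:ℝ)+2)) = -(K/((n:ℝ)+2)) := by ring
  rw [hc₁] at hIle
  have hneg : (-(2*(K*m)))/((n:ℝ)+1) = -(2*(K*m)/((n:ℝ)+1)) := by ring
  linarith [hIle, hexp, hd1, e2, hah, hKn2, hneg]

lemma step_low (hsupp : μ (Set.Icc (0:ℝ) 1)ᶜ = 0) {h m a K : ℝ}
    (hh : ∫ θ, binEnt θ ∂μ = h) (hm : ∫ θ, θ*(1-θ) ∂μ = m)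
    (hah : a * h = 1) (ha : 0 < a) (hK : 0 < K)
    (hKm2 : a/Real.log 2 ≤ 2*(K*m)) (n : ℕ) (hn : 1 ≤ n) :
    Psi a K (n+1) - 1 ≤ gammaExp μ (n+1) (Psi a K) := by
  have hL := log2pos
  set c₁ : ℝ := a * Real.logb 2 ((n:ℝ)+1) + K/((n:ℝ)+1) + (-K) with hc₁
  set c₃ : ℝ := 2*K/((n:ℝ)+1) with hc₃
  have hn1 : (0:ℝ) < (n:ℝ)+1 := by positivity
  have hptw : ∀ᵐ θ ∂μ, c₁ + ((-a) * binEnt θ + c₃ * (θ*(1-θ))) ≤ Eg n θ (Psi a K) := by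
    filter_upwards [ae_Icc hsupp] with θ hθ
    have e : Eg n θ (Psi a K) = a * Eg n θ glog + (K * Eg n θ ginv + (-K)) :=
      Eg_affine n θ a K (-K)
    have A1 : a * (Real.logb 2 ((n:ℝ)+1) - binEnt θ) ≤ a * Eg n θ glog :=
      mul_le_mul_of_nonneg_left (Eg_log_ge n hθ) ha.le
    have A2 : K * ((1 + 2*θ*(1-θ))/((n:ℝ)+1)) ≤ K * Eg n θ ginv :=
      mul_le_mul_of_nonneg_left (Eg_inv_ge n hn hθ) hK.le
    rw [e, hc₁, hc₃]
    ring_nf at A1 A2 ⊢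
    linarith
  have hint2 : Integrable (fun θ : ℝ => (-a) * binEnt θ + c₃ * (θ*(1-θ))) μ :=
    ((integrable_binEnt hsupp).const_mul (-a)).add
      ((integrable_q hsupp).const_mul c₃)
  have hintG : Integrable (fun θ => c₁ + ((-a) * binEnt θ + c₃ * (θ*(1-θ)))) μ :=
    (integrable_const c₁).add hint2
  have hIle : c₁ + ((-a) * h + c₃ * m) ≤ gammaExp μ (n+1) (Psi a K) := by
    rw [gammaExp_Eg]
    calc c₁ + ((-a) * h + c₃ * m)
        = ∫ θ, (c₁ + ((-a) * binEnt θ + c₃ * (θ*(1-θ)))) ∂μ := by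
          rw [integral_add (integrable_const c₁) hint2,
            integral_add ((integrable_binEnt hsupp).const_mul (-a))
              ((integrable_q hsupp).const_mul c₃),
            integral_const_mul, integral_const_mul, hh, hm]
          simp
      _ ≤ ∫ θ, Eg n θ (Psi a K) ∂μ :=
          integral_mono_ae hintG (integrable_Eg hsupp n _) hptw
  have hPsi : Psi a K (n+1) - 1
      = a * Real.logb 2 ((n:ℝ)+2) + K * (1/((n:ℝ)+2)) + (-K) - 1 := by
    unfold Psi glog ginv
    push_cast
    ring_nf
  rw [hPsi]
  have hdiff := logb_diff_le (x := (n:ℝ)+1) (by norm_num)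
  rw [show (n:ℝ)+1+1 = (n:ℝ)+2 by ring] at hdiff
  have hadiff : a * (Real.logb 2 ((n:ℝ)+2) - Real.logb 2 ((n:ℝ)+1))
      ≤ a * (1/(((n:ℝ)+1)*Real.log 2)) := mul_le_mul_of_nonneg_left hdiff ha.le
  have s2 : a * (1/(((n:ℝ)+1)*Real.log 2)) = (a/Real.log 2)/((n:ℝ)+1) := by
    rw [mul_one_div, div_div]
    ring_nf
  have s3 : (a/Real.log 2)/((n:ℝ)+1) ≤ (2*(K*m))/((n:ℝ)+1) :=
    (div_le_div_iff_of_pos_right hn1).mpr hKm2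
  rw [s2] at hadiff
  have hd1 : K/((n:ℝ)+2) ≤ K/((n:ℝ)+1) :=
    div_le_div_of_nonneg_left hK.le hn1 (by linarith)
  have hexp : c₃ * m = (2*(K*m))/((n:ℝ)+1) := by rw [hc₃]; ring
  have hKn2 : K * (1/((n:ℝ)+2)) = K/((n:ℝ)+2) := by ring
  rw [hc₁] at hIle
  linarith [hIle, hexp, hd1, hadiff, s3, hah, hKn2]
end Steps

set_option maxHeartbeats 1000000 in
theorem stmt1 (μ : Measure ℝ) [IsProbabilityMeasure μ]
    (hsupp : μ (Set.Icc (0:ℝ) 1)ᶜ = 0)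
    (h : ℝ) (hdef : h = ∫ θ, binEnt θ ∂μ) (hpos : 0 < h)
    (Δ : ℕ → ℝ) (hΔ0 : Δ 0 = 1)
    (hΔrec : ∀ ℓ : ℕ, 1 ≤ ℓ → Δ ℓ = 1 + gammaExp μ ℓ Δ) :
    ∃ C : ℝ, ∀ ℓ : ℕ, 1 ≤ ℓ → |Δ ℓ - (1 / h) * Real.logb 2 ℓ| ≤ C := by
  have hL := log2pos
  have hLlt : Real.log 2 < 1 := by linarith [Real.log_two_lt_d9]
  have hae := ae_Icc (μ := μ) hsupp
  have hint_b := integrable_binEnt (μ := μ) hsupp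
  have hintq := integrable_q (μ := μ) hsupp
  -- bound on h
  have hble : h ≤ 2/Real.log 2 := by
    rw [hdef]
    have step : ∫ θ, binEnt θ ∂μ ≤ ∫ _θ, 2/Real.log 2 ∂μ := by
      apply integral_mono_ae hint_b (integrable_const _)
      filter_upwards [hae] with θ hθ
      exact le_trans (le_abs_self _) (binEnt_abs_le hθ)
    simpa using step
  set a : ℝ := 1/h with haa
  have ha : 0 < a := by rw [haa]; positivity
  have hah : a * h = 1 := by rw [haa]; field_simp
  have haL : Real.log 2 / 2 ≤ a := by
    rw [haa, div_le_div_iff₀ (by norm_num) hpos]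
    have e1 : Real.log 2 * (2/Real.log 2) = 2 := by field_simp
    nlinarith [mul_le_mul_of_nonneg_left hble hL.le]
  -- the mass m
  set m : ℝ := ∫ θ, θ*(1-θ) ∂μ with hmm
  have haeq : 0 ≤ᵐ[μ] fun θ : ℝ => θ*(1-θ) := by
    filter_upwards [hae] with θ hθ
    simp only [Pi.zero_apply]
    nlinarith [hθ.1, hθ.2]
  have hm0 : 0 ≤ m := integral_nonneg_of_ae haeq
  have hmpos : 0 < m := by
    rcases eq_or_lt_of_le hm0 with heq | hlt
    · exfalso
      have hq0 := (integral_eq_zero_iff_of_nonneg_ae haeq hintq).mp heq.symm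
      have hbe : binEnt =ᵐ[μ] 0 := by
        filter_upwards [hq0] with θ h1
        have h1' : θ * (1-θ) = 0 := h1
        rcases mul_eq_zero.mp h1' with h2 | h2
        · rw [Pi.zero_apply, h2]; simp [binEnt]
        · have : θ = 1 := by linarith
          rw [Pi.zero_apply, this]; simp [binEnt]
      have : h = 0 := by rw [hdef, integral_congr_ae hbe]; simp
      linarith
    · exact hlt
  have hm14 : m ≤ 1/4 := by
    have step : m ≤ ∫ _θ, (1/4 : ℝ) ∂μ := by
      rw [hmm]
      apply integral_mono_ae hintq (integrable_const _)
      filter_upwards [hae] with θ hθ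
      nlinarith [hθ.1, hθ.2, sq_nonneg (θ - 1/2)]
    simpa using step
  -- constant K
  set K : ℝ := 3*a/(m*Real.log 2) with hKK
  have hK : 0 < K := by rw [hKK]; positivity
  have hKmval : K * m = 3*a/Real.log 2 := by
    rw [hKK]; field_simp
  have hKmL : a/Real.log 2 ≤ K*m := by
    rw [hKmval]
    exact (div_le_div_iff_of_pos_right hL).mpr (by linarith)
  have hKm2 : a/Real.log 2 ≤ 2*(K*m) := by
    rw [hKmval]
    have h2 : a/Real.log 2 ≤ 3*a/Real.log 2 := (div_le_div_iff_of_pos_right hL).mpr (by linarith)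
    have h3 : 0 ≤ 3*a/Real.log 2 := by positivity
    linarith
  have hK6 : 6*a ≤ K := by
    rw [hKK, le_div_iff₀ (by positivity)]
    nlinarith [mul_le_mul hm14 hLlt.le hL.le (by norm_num : (0:ℝ) ≤ 1/4), ha]
  have h1aK : 1 ≤ a + K/2 := by
    nlinarith [haL, hK6, Real.log_two_gt_d9, ha]
  clear_value a m K
  -- one-step inequalities
  have hPhi0 : Phi a K 0 = 1 := by unfold Phi glog ginv; norm_num
  have hPsi0 : Psi a K 0 = 0 := by unfold Psi glog ginv; norm_num
  have hPhi1 : Phi a K 1 = a + (-K)*(1/2) + (K+1) := by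
    unfold Phi glog ginv
    norm_num [Real.logb_self_eq_one]
    ring
  have hPsi1 : Psi a K 1 = a + K*(1/2) + (-K) := by
    unfold Psi glog ginv
    norm_num [Real.logb_self_eq_one]
    ring
  have stepU : ∀ n : ℕ, 1 + gammaExp μ (n+1) (Phi a K) ≤ Phi a K (n+1) := by
    intro n
    cases n with
    | zero =>
      rw [gammaExp_one, hPhi0, hPhi1]
      linarith
    | succ n =>
      have := step_up hsupp hdef.symm hmm.symm hah ha hK hKmL (n+1) (by omega)
      linarith
  have stepL : ∀ n : ℕ, Psi a K (n+1) ≤ 1 + gammaExp μ (n+1) (Psi a K) := by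
    intro n
    cases n with
    | zero =>
      rw [gammaExp_one, hPsi0, hPsi1]
      linarith [hK6, ha]
    | succ n =>
      have := step_low hsupp hdef.symm hmm.symm hah ha hK hKm2 (n+1) (by omega)
      linarith
  -- inductions
  have hup : ∀ ℓ, Δ ℓ ≤ Phi a K ℓ := by
    intro ℓ
    induction ℓ using Nat.strong_induction_on with
    | _ ℓ ih =>
      cases ℓ with
      | zero => rw [hΔ0, hPhi0]
      | succ n =>
        rw [hΔrec (n+1) (by omega)]
        have h1 : gammaExp μ (n+1) Δ ≤ gammaExp μ (n+1) (Phi a K) :=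
          gammaExp_mono μ hsupp n (fun k hk => ih k (by omega))
        linarith [stepU n]
  have hlow : ∀ ℓ, Psi a K ℓ ≤ Δ ℓ := by
    intro ℓ
    induction ℓ using Nat.strong_induction_on with
    | _ ℓ ih =>
      cases ℓ with
      | zero => rw [hΔ0, hPsi0]; norm_num
      | succ n =>
        rw [hΔrec (n+1) (by omega)]
        have h1 : gammaExp μ (n+1) (Psi a K) ≤ gammaExp μ (n+1) Δ :=
          gammaExp_mono μ hsupp n (fun k hk => ih k (by omega))
        linarith [stepL n]
  -- conclusion
  refine ⟨2*a + K + 1, ?_⟩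
  intro ℓ hℓ
  have hℓ1 : (1:ℝ) ≤ (ℓ:ℝ) := by exact_mod_cast hℓ
  have hℓ0 : (0:ℝ) < (ℓ:ℝ) := by linarith
  have hlogmono : Real.logb 2 (ℓ:ℝ) ≤ Real.logb 2 ((ℓ:ℝ)+1) := by
    gcongr <;> linarith
  have hdiff := logb_diff_le (x := (ℓ:ℝ)) hℓ1
  have hdiff2 : Real.logb 2 ((ℓ:ℝ)+1) - Real.logb 2 (ℓ:ℝ) ≤ 2 := by
    have e1 : 1/((ℓ:ℝ)*Real.log 2) ≤ 2 := by
      rw [div_le_iff₀ (by positivity)]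
      nlinarith [Real.log_two_gt_d9, hℓ1]
    linarith
  have hPl : Phi a K ℓ = a * Real.logb 2 ((ℓ:ℝ)+1) + (-K)*(1/((ℓ:ℝ)+1)) + (K+1) := by
    unfold Phi glog ginv; ring
  have hQl : Psi a K ℓ = a * Real.logb 2 ((ℓ:ℝ)+1) + K*(1/((ℓ:ℝ)+1)) + (-K) := by
    unfold Psi glog ginv; ring
  have hup' := hup ℓ
  have hlow' := hlow ℓ
  rw [hPl] at hup'
  rw [hQl] at hlow'
  have t1 : (0:ℝ) ≤ K * (1/((ℓ:ℝ)+1)) := by positivity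
  have t2 := mul_le_mul_of_nonneg_left hlogmono ha.le
  have t3 := mul_le_mul_of_nonneg_left hdiff2 ha.le
  rw [abs_le]
  constructor
  · linarith
  · linarith
end

section
/- Let Π be a Borel probability measure on [0,1] with h := E_{Θ~Π}[H_B(Θ)] > 0, and let m₁ : ℕ → ℝ be the unique function with m₁(0) = 0 and, for ℓ ≥ 1, m₁(ℓ) = ℓ + E[m₁(ℓ-1-R_ℓ) + m₁(R_ℓ)]. Let (ℓ_k) be any strictly increasing sequence of integers with ℓ_k ≥ 2 and ℓ_{k+1}/ℓ_k → 1 as k → ∞. Then (m₁(ℓ_{k+1}) - m₁(ℓ_k))/(ℓ_k·log₂ ℓ_k) → 0 as k → ∞. -/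
open MeasureTheory Filter

section Helpers
open Real Finset

noncomputable def bw (n k : ℕ) (θ : ℝ) : ℝ := (n.choose k : ℝ) * θ ^ k * (1 - θ) ^ (n - k)

lemma bw_sum (n : ℕ) (θ : ℝ) : ∑ k ∈ range (n+1), bw n k θ = 1 := by
  have h := add_pow θ (1-θ) n
  simp only [add_sub_cancel, one_pow] at h
  rw [show ∑ k ∈ range (n+1), bw n k θ
      = ∑ k ∈ range (n+1), θ^k * (1-θ)^(n-k) * (n.choose k : ℝ) from
    Finset.sum_congr rfl fun k _ => by simp only [bw]; ring, ← h]

lemma bw_split (n : ℕ) (θ : ℝ) (g : ℕ → ℝ) :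
    ∑ k ∈ range (n+2), bw (n+1) k θ * g k
      = ∑ j ∈ range (n+1), bw n j θ * (θ * g (j+1) + (1-θ) * g j) := by
  have expand : ∑ j ∈ range (n+1), bw n j θ * (θ * g (j+1) + (1-θ) * g j)
      = (∑ j ∈ range (n+1), bw n j θ * θ * g (j+1))
        + ∑ j ∈ range (n+1), bw n j θ * (1-θ) * g j := by
    rw [← Finset.sum_add_distrib]; exact Finset.sum_congr rfl fun j _ => by ring
  rw [expand]
  rw [Finset.sum_range_succ' (fun k => bw (n+1) k θ * g k) (n+1)]
  have key : ∀ j ∈ range (n+1), bw (n+1) (j+1) θ * g (j+1)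
      = bw n j θ * θ * g (j+1) + bw n (j+1) θ * (1-θ) * g (j+1) := by
    intro j hj
    simp only [bw, Nat.choose_succ_succ]
    push_cast
    rcases Nat.lt_or_ge j n with hlt | hge
    · have h3 : n - j = (n - (j+1)) + 1 := by omega
      rw [h3]; ring
    · have hj' : j = n := by simp at hj; omega
      subst hj'
      rw [Nat.choose_succ_self]
      push_cast
      simp only [Nat.sub_self, Nat.succ_sub_succ]
      ring
  rw [Finset.sum_congr rfl key, Finset.sum_add_distrib]
  have last : ∑ j ∈ range (n+1), bw n (j+1) θ * (1-θ) * g (j+1)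
      = ∑ j ∈ range (n+2), bw n j θ * (1-θ) * g j - bw n 0 θ * (1-θ) * g 0 := by
    rw [Finset.sum_range_succ' (fun j => bw n j θ * (1-θ) * g j) (n+1)]; ring
  rw [last]
  have drop : ∑ j ∈ range (n+2), bw n j θ * (1-θ) * g j
      = ∑ j ∈ range (n+1), bw n j θ * (1-θ) * g j := by
    rw [Finset.sum_range_succ]
    simp [bw, Nat.choose_succ_self]
  rw [drop]
  have comb : ∀ j ∈ range (n+1), bw n j θ * θ * g j + bw n j θ * (1-θ) * g j
      = bw n j θ * g j := fun j _ => by ring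
  have sumcomb : ∑ j ∈ range (n+1), bw n j θ * θ * g j
        + ∑ j ∈ range (n+1), bw n j θ * (1-θ) * g j
      = ∑ j ∈ range (n+1), bw n j θ * g j := by
    rw [← Finset.sum_add_distrib]; exact Finset.sum_congr rfl comb
  have h0 : bw (n+1) 0 θ * g 0 = bw n 0 θ * (1-θ) * g 0 := by
    simp [bw, pow_succ]
  linarith [sumcomb]

lemma bw_mean (n : ℕ) (θ : ℝ) : ∑ k ∈ range (n+1), bw n k θ * k = n * θ := by
  induction n with
  | zero => simp
  | succ m ih =>
      rw [bw_split m θ (fun k => (k:ℝ))]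
      have : ∀ j ∈ range (m+1), bw m j θ * (θ * ((j:ℝ)+1) + (1-θ) * j)
          = bw m j θ * θ + bw m j θ * j := fun j _ => by ring
      rw [Finset.sum_congr rfl (fun j hj => by push_cast; exact this j hj)]
      rw [Finset.sum_add_distrib, ← Finset.sum_mul, bw_sum, ih]
      push_cast; ring


lemma measurable_logb : Measurable fun x : ℝ => Real.logb 2 x :=
  Real.measurable_log.div_const _

lemma ae_mem_Icc (μ : Measure ℝ) (hsupp : μ (Set.Icc (0:ℝ) 1)ᶜ = 0) :
    ∀ᵐ θ ∂μ, θ ∈ Set.Icc (0:ℝ) 1 := by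
  rw [MeasureTheory.ae_iff]
  exact hsupp

lemma integrable_of_meas_bdd (μ : Measure ℝ) [IsProbabilityMeasure μ]
    (hsupp : μ (Set.Icc (0:ℝ) 1)ᶜ = 0) (f : ℝ → ℝ)
    (hm : AEStronglyMeasurable f μ) (hc : ContinuousOn f (Set.Icc 0 1)) :
    Integrable f μ := by
  obtain ⟨C, hC⟩ := (isCompact_Icc (a := (0:ℝ)) (b := 1)).exists_bound_of_continuousOn hc
  exact (integrable_const C).mono' hm
    ((ae_mem_Icc μ hsupp).mono fun θ hθ => hC θ hθ)

lemma integrable_of_cont (μ : Measure ℝ) [IsProbabilityMeasure μ]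
    (hsupp : μ (Set.Icc (0:ℝ) 1)ᶜ = 0) (f : ℝ → ℝ) (hc : Continuous f) :
    Integrable f μ :=
  integrable_of_meas_bdd μ hsupp f hc.aestronglyMeasurable hc.continuousOn

noncomputable def Kf (n : ℕ) (θ : ℝ) : ℝ :=
  -(θ * Real.logb 2 (θ + 1/(n+1))) - (1-θ) * Real.logb 2 (1 - θ + 1/(n+1))

lemma Kf_meas (n : ℕ) : Measurable (Kf n) := by
  unfold Kf
  exact ((measurable_id.mul (measurable_logb.comp (measurable_id.add_const _))).neg).sub
    ((measurable_const.sub measurable_id).mul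
      (measurable_logb.comp ((measurable_const.sub measurable_id).add_const _)))

lemma term_bound {x : ℝ} (hx0 : 0 ≤ x) (hx1 : x ≤ 1) {δ : ℝ} (hδ0 : 0 < δ) (hδ1 : δ ≤ 1) :
    |(-(x * Real.logb 2 (x + δ)))| ≤ 2 := by
  have hpos : 0 < x + δ := by linarith
  have hub : Real.logb 2 (x + δ) ≤ 1 := by
    rw [show (1:ℝ) = Real.logb 2 2 by simp [Real.logb_self_eq_one]]
    exact Real.logb_le_logb_of_le one_lt_two hpos (by linarith)
  have hlb : -(x * Real.logb 2 (x + δ)) ≤ 2 := by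
    rcases le_or_gt 1 (x + δ) with hge | hlt
    · have : 0 ≤ Real.logb 2 (x + δ) := Real.logb_nonneg one_lt_two hge
      nlinarith
    · have hlog : Real.log (x + δ) ≤ (x + δ) - 1 := Real.log_le_sub_one_of_pos hpos
      have hlog2 : (0.6931:ℝ) ≤ Real.log 2 := by
        have := Real.log_two_gt_d9
        linarith
      have hx' : -(x * Real.logb 2 (x + δ)) = x * (-Real.log (x+δ)) / Real.log 2 := by
        rw [Real.logb]; ring
      rw [hx']
      have h1 : x * (-Real.log (x+δ)) ≤ x * (-Real.log x) := by
        rcases eq_or_lt_of_le hx0 with rfl | hx0'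
        · simp
        · have := Real.log_le_log hx0' (by linarith : x ≤ x + δ)
          nlinarith
      have h2 : x * (-Real.log x) ≤ 1 := by
        rcases eq_or_lt_of_le hx0 with rfl | hx0'
        · simp
        · have := Real.log_le_sub_one_of_pos (show 0 < x⁻¹ by positivity)
          rw [Real.log_inv] at this
          nlinarith [mul_inv_cancel₀ (ne_of_gt hx0'),
            mul_le_mul_of_nonneg_left this (le_of_lt hx0')]
      have : x * (-Real.log (x+δ)) ≤ 1 := h1.trans h2
      rw [div_le_iff₀ (by linarith)]
      nlinarith
  have hlb2 : -2 ≤ -(x * Real.logb 2 (x + δ)) := by nlinarith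
  rw [abs_le]; exact ⟨hlb2, hlb⟩

lemma Kf_bdd (n : ℕ) {θ : ℝ} (hθ : θ ∈ Set.Icc (0:ℝ) 1) : |Kf n θ| ≤ 4 := by
  obtain ⟨h0, h1⟩ := hθ
  have hδ0 : (0:ℝ) < 1/(n+1) := by positivity
  have hδ1 : (1:ℝ)/(n+1) ≤ 1 := by
    rw [div_le_one (by positivity)]
    simp
  have t1 := term_bound h0 h1 hδ0 hδ1
  have t2 := term_bound (by linarith : (0:ℝ) ≤ 1 - θ) (by linarith) hδ0 hδ1
  have : Kf n θ = (-(θ * Real.logb 2 (θ + 1/(n+1)))) + (-((1-θ) * Real.logb 2 (1 - θ + 1/(n+1)))) := by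
    unfold Kf; ring
  rw [this]
  calc |(-(θ * Real.logb 2 (θ + 1/(n+1)))) + (-((1-θ) * Real.logb 2 (1 - θ + 1/(n+1))))|
      ≤ |(-(θ * Real.logb 2 (θ + 1/(n+1))))| + |(-((1-θ) * Real.logb 2 (1 - θ + 1/(n+1))))| :=
        abs_add_le _ _
    _ ≤ 4 := by linarith

lemma term_tendsto {x : ℝ} (hx : 0 ≤ x) :
    Tendsto (fun n : ℕ => -(x * Real.logb 2 (x + 1/(n+1)))) atTop (nhds (-(x * Real.logb 2 x))) := by
  rcases eq_or_lt_of_le hx with rfl | hx'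
  · simp only [zero_mul, neg_zero, zero_add]
    exact tendsto_const_nhds
  · have hd : Tendsto (fun n : ℕ => x + 1/(n+1)) atTop (nhds x) := by
      have : Tendsto (fun n : ℕ => 1/((n:ℝ)+1)) atTop (nhds 0) := tendsto_one_div_add_atTop_nhds_zero_nat
      simpa using tendsto_const_nhds.add this
    have hcont : ContinuousAt (fun y : ℝ => -(x * Real.logb 2 y)) x := by
      apply ContinuousAt.neg
      apply ContinuousAt.mul continuousAt_const
      have : ContinuousAt Real.log x := Real.continuousAt_log (ne_of_gt hx')
      exact this.div_const _
    exact (hcont.tendsto.comp hd)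

lemma Kf_tendsto {θ : ℝ} (hθ : θ ∈ Set.Icc (0:ℝ) 1) :
    Tendsto (fun n : ℕ => Kf n θ) atTop (nhds (binEnt θ)) := by
  obtain ⟨h0, h1⟩ := hθ
  have t1 := term_tendsto h0
  have t2 := term_tendsto (by linarith : (0:ℝ) ≤ 1 - θ)
  have : binEnt θ = (-(θ * Real.logb 2 θ)) + (-((1-θ) * Real.logb 2 (1-θ))) := by
    unfold binEnt; ring
  rw [this]
  have : (fun n : ℕ => Kf n θ)
      = fun n : ℕ => (-(θ * Real.logb 2 (θ + 1/(n+1)))) + (-((1-θ) * Real.logb 2 (1 - θ + 1/(n+1)))) := by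
    funext n; unfold Kf; ring
  rw [this]
  exact t1.add t2

lemma jensen_logb {ι : Type*} (t : Finset ι) (wgt p : ι → ℝ)
    (hw0 : ∀ i ∈ t, 0 ≤ wgt i) (hw1 : ∑ i ∈ t, wgt i = 1) (hp : ∀ i ∈ t, 0 < p i) :
    ∑ i ∈ t, wgt i * Real.logb 2 (p i) ≤ Real.logb 2 (∑ i ∈ t, wgt i * p i) := by
  have hconc : ConcaveOn ℝ (Set.Ioi 0) Real.log := strictConcaveOn_log_Ioi.concaveOn
  have hj := hconc.le_map_sum hw0 hw1 (fun i hi => hp i hi)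
  simp only [smul_eq_mul] at hj
  have hlog2 : (0:ℝ) < Real.log 2 := Real.log_pos one_lt_two
  rw [show ∑ i ∈ t, wgt i * Real.logb 2 (p i)
      = (∑ i ∈ t, wgt i * Real.log (p i)) / Real.log 2 by
    rw [Finset.sum_div]; exact Finset.sum_congr rfl fun i _ => by rw [Real.logb]; ring]
  rw [Real.logb, div_le_div_iff_of_pos_right hlog2]
  exact hj

lemma bw_nonneg (n k : ℕ) {θ : ℝ} (h0 : 0 ≤ θ) (h1 : θ ≤ 1) : 0 ≤ bw n k θ := by
  unfold bw
  apply mul_nonneg (mul_nonneg (by positivity) (pow_nonneg h0 _)) (pow_nonneg (by linarith) _)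

lemma chain (l : ℕ) (hl : 1 ≤ l) {θ : ℝ} (h0 : 0 ≤ θ) (h1 : θ ≤ 1) :
    ∑ k ∈ range l, bw (l-1) k θ * (θ * Real.logb 2 ((k:ℝ)+1)
        + (1-θ) * Real.logb 2 (((l-k : ℕ):ℝ)))
      ≤ Real.logb 2 ((l:ℝ)+1) - Kf l θ := by
  obtain ⟨n, rfl⟩ : ∃ n, l = n + 1 := ⟨l - 1, by omega⟩
  simp only [Nat.add_sub_cancel]
  set δ : ℝ := 1/((n:ℝ)+1+1) with hδ
  have hδ0 : 0 < δ := by positivity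
  have hsplit : ∑ k ∈ range (n+1), bw n k θ * (θ * Real.logb 2 ((k:ℝ)+1)
        + (1-θ) * Real.logb 2 (((n+1-k : ℕ):ℝ)))
      = θ * (∑ k ∈ range (n+1), bw n k θ * Real.logb 2 ((k:ℝ)+1))
        + (1-θ) * (∑ k ∈ range (n+1), bw n k θ * Real.logb 2 (((n+1-k : ℕ):ℝ))) := by
    rw [Finset.mul_sum, Finset.mul_sum, ← Finset.sum_add_distrib]
    exact Finset.sum_congr rfl fun k _ => by ring
  rw [hsplit]
  have hwpos : ∀ k ∈ range (n+1), 0 ≤ bw n k θ := fun k _ => bw_nonneg n k h0 h1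
  have hA : ∑ k ∈ range (n+1), bw n k θ * Real.logb 2 ((k:ℝ)+1)
      ≤ Real.logb 2 ((n:ℝ)*θ + 1) := by
    have := jensen_logb (range (n+1)) (fun k => bw n k θ) (fun k => (k:ℝ)+1)
      hwpos (bw_sum n θ) (fun k _ => by positivity)
    have hs : ∑ k ∈ range (n+1), bw n k θ * ((k:ℝ)+1) = (n:ℝ)*θ + 1 := by
      have e : ∑ k ∈ range (n+1), bw n k θ * ((k:ℝ)+1)
          = ∑ k ∈ range (n+1), (bw n k θ * k + bw n k θ) :=
        Finset.sum_congr rfl fun k _ => by ring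
      rw [e, Finset.sum_add_distrib, bw_mean, bw_sum]
    rwa [hs] at this
  have hB : ∑ k ∈ range (n+1), bw n k θ * Real.logb 2 (((n+1-k : ℕ):ℝ))
      ≤ Real.logb 2 (((n:ℝ)+1) - (n:ℝ)*θ) := by
    have hj := jensen_logb (range (n+1)) (fun k => bw n k θ) (fun k => ((n+1-k : ℕ):ℝ))
      hwpos (bw_sum n θ) (fun k hk => by
        show (0:ℝ) < ((n+1-k : ℕ):ℝ)
        have h : 0 < n + 1 - k := by simp at hk; omega
        exact_mod_cast h)
    have hs : ∑ k ∈ range (n+1), bw n k θ * ((n+1-k : ℕ):ℝ) = ((n:ℝ)+1) - (n:ℝ)*θ := by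
      have : ∀ k ∈ range (n+1), bw n k θ * ((n+1-k : ℕ):ℝ)
          = bw n k θ * ((n:ℝ)+1) - bw n k θ * k := by
        intro k hk
        have hk' : k ≤ n + 1 := by simp at hk; omega
        rw [Nat.cast_sub hk']
        push_cast; ring
      rw [Finset.sum_congr rfl this, Finset.sum_sub_distrib, ← Finset.sum_mul, bw_sum, bw_mean]
      ring
    rwa [hs] at hj
  have hl2 : (1:ℝ) < 2 := one_lt_two
  have hposA : (0:ℝ) < (n:ℝ)*θ + 1 := by positivity
  have hposB : (0:ℝ) < ((n:ℝ)+1) - (n:ℝ)*θ := by nlinarith [Nat.cast_nonneg (α := ℝ) n]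
  have hposl : (0:ℝ) < ((n:ℝ)+1+1) := by positivity
  have hA2 : Real.logb 2 ((n:ℝ)*θ + 1) ≤ Real.logb 2 (((n:ℝ)+1+1) * (θ + δ)) := by
    apply Real.logb_le_logb_of_le hl2 hposA
    have : ((n:ℝ)+1+1) * δ = 1 := by rw [hδ]; field_simp
    nlinarith
  have hB2 : Real.logb 2 (((n:ℝ)+1) - (n:ℝ)*θ) ≤ Real.logb 2 (((n:ℝ)+1+1) * ((1-θ) + δ)) := by
    apply Real.logb_le_logb_of_le hl2 hposB
    have : ((n:ℝ)+1+1) * δ = 1 := by rw [hδ]; field_simp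
    nlinarith
  have hmulA : Real.logb 2 (((n:ℝ)+1+1) * (θ + δ))
      = Real.logb 2 ((n:ℝ)+1+1) + Real.logb 2 (θ + δ) :=
    Real.logb_mul (ne_of_gt hposl) (ne_of_gt (by linarith : (0:ℝ) < θ + δ))
  have hmulB : Real.logb 2 (((n:ℝ)+1+1) * ((1-θ) + δ))
      = Real.logb 2 ((n:ℝ)+1+1) + Real.logb 2 ((1-θ) + δ) :=
    Real.logb_mul (ne_of_gt hposl) (ne_of_gt (by linarith : (0:ℝ) < (1-θ) + δ))
  have hKf : Kf (n+1) θ = -(θ * Real.logb 2 (θ + δ)) - (1-θ) * Real.logb 2 (1 - θ + δ) := by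
    unfold Kf
    push_cast
    rw [hδ]
  have e1 : θ * (∑ k ∈ range (n+1), bw n k θ * Real.logb 2 ((k:ℝ)+1))
      ≤ θ * Real.logb 2 (((n:ℝ)+1+1) * (θ + δ)) :=
    mul_le_mul_of_nonneg_left (hA.trans hA2) h0
  have e2 : (1-θ) * (∑ k ∈ range (n+1), bw n k θ * Real.logb 2 (((n+1-k : ℕ):ℝ)))
      ≤ (1-θ) * Real.logb 2 (((n:ℝ)+1+1) * ((1-θ) + δ)) :=
    mul_le_mul_of_nonneg_left (hB.trans hB2) (by linarith)
  have := add_le_add e1 e2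
  rw [hmulA, hmulB] at this
  push_cast
  rw [hKf]
  nlinarith [this]

end Helpers

section MainAux
open Real Finset

lemma Kf_contOn (n : ℕ) : ContinuousOn (Kf n) (Set.Icc (0:ℝ) 1) := by
  intro θ hθ
  obtain ⟨h0, h1⟩ := hθ
  have hd : (0:ℝ) < 1/((n:ℝ)+1) := by positivity
  have hp1 : θ + 1/((n:ℝ)+1) ≠ 0 := by positivity
  have hp2 : 1 - θ + 1/((n:ℝ)+1) ≠ 0 := by
    have : (0:ℝ) < 1 - θ + 1/((n:ℝ)+1) := by linarith
    exact ne_of_gt this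
  apply ContinuousAt.continuousWithinAt
  have l1 : ContinuousAt (fun y : ℝ => Real.logb 2 (y + 1/((n:ℝ)+1))) θ := by
    have hadd : ContinuousAt (fun y : ℝ => y + 1/((n:ℝ)+1)) θ := by fun_prop
    have : ContinuousAt (fun y : ℝ => Real.log (y + 1/((n:ℝ)+1))) θ :=
      hadd.log hp1
    exact this.div_const _
  have l2 : ContinuousAt (fun y : ℝ => Real.logb 2 (1 - y + 1/((n:ℝ)+1))) θ := by
    have hadd : ContinuousAt (fun y : ℝ => 1 - y + 1/((n:ℝ)+1)) θ := by fun_prop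
    have : ContinuousAt (fun y : ℝ => Real.log (1 - y + 1/((n:ℝ)+1))) θ :=
      hadd.log hp2
    exact this.div_const _
  exact ((continuousAt_id.mul l1).neg).sub ((continuousAt_const.sub continuousAt_id).mul l2)

lemma cont_bw (p k : ℕ) : Continuous (fun θ : ℝ => bw p k θ) := by
  unfold bw; fun_prop

lemma cont_bw_sum (m p : ℕ) (F : ℕ → ℝ → ℝ) (hF : ∀ k, Continuous (F k)) :
    Continuous (fun θ : ℝ => ∑ k ∈ range m, bw p k θ * F k θ) := by
  apply continuous_finset_sum
  exact fun k _ => (cont_bw p k).mul (hF k)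

end MainAux

theorem stmt10 (μ : Measure ℝ) [IsProbabilityMeasure μ]
    (hsupp : μ (Set.Icc (0:ℝ) 1)ᶜ = 0)
    (h : ℝ) (hdef : h = ∫ θ, binEnt θ ∂μ) (hpos : 0 < h)
    (m₁ : ℕ → ℝ) (hm0 : m₁ 0 = 0)
    (hmrec : ∀ ℓ : ℕ, 1 ≤ ℓ →
      m₁ ℓ = (ℓ : ℝ) + binExp μ ℓ (fun k => m₁ (ℓ - 1 - k) + m₁ k))
    (ℓ : ℕ → ℕ) (hmono : StrictMono ℓ) (hℓ2 : ∀ k, 2 ≤ ℓ k)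
    (hratio : Tendsto (fun k => (ℓ (k + 1) : ℝ) / (ℓ k : ℝ)) atTop (nhds 1)) :
    Tendsto (fun k => (m₁ (ℓ (k + 1)) - m₁ (ℓ k)) / ((ℓ k : ℝ) * Real.logb 2 (ℓ k)))
      atTop (nhds 0) := by
  classical
  have hae := ae_mem_Icc μ hsupp
  set d : ℕ → ℝ := fun n => m₁ (n+1) - m₁ n with hd
  have hbe : ∀ (l : ℕ) (g : ℕ → ℝ),
      binExp μ l g = ∫ θ, (∑ k ∈ Finset.range l, bw (l-1) k θ * g k) ∂μ := fun l g => rfl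
  have hm1 : m₁ 1 = 1 := by
    rw [hmrec 1 le_rfl]
    simp [binExp, hm0]
  have hd0 : d 0 = 1 := by simp [hd, hm1, hm0]
  have hint : ∀ (m p : ℕ) (F : ℕ → ℝ → ℝ), (∀ k, Continuous (F k)) →
      Integrable (fun θ => ∑ k ∈ Finset.range m, bw p k θ * F k θ) μ :=
    fun m p F hF => integrable_of_cont μ hsupp _ (cont_bw_sum m p F hF)
  have drec : ∀ n : ℕ, d (n+1) = 1 + ∫ θ, (∑ k ∈ Finset.range (n+1),
      bw n k θ * (θ * d k + (1-θ) * d (n-k))) ∂μ := by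
    intro n
    have e2 : m₁ (n+2) = ((n:ℝ)+2) + ∫ θ, (∑ k ∈ Finset.range (n+2),
        bw (n+1) k θ * (m₁ (n+1-k) + m₁ k)) ∂μ := by
      have := hmrec (n+2) (by omega)
      rw [hbe] at this
      rw [this]
      norm_num
    have e1 : m₁ (n+1) = ((n:ℝ)+1) + ∫ θ, (∑ k ∈ Finset.range (n+1),
        bw n k θ * (m₁ (n-k) + m₁ k)) ∂μ := by
      have := hmrec (n+1) (by omega)
      rw [hbe] at this
      rw [this]
      norm_num
    have hint2 : Integrable (fun θ => ∑ k ∈ Finset.range (n+2),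
        bw (n+1) k θ * (m₁ (n+1-k) + m₁ k)) μ :=
      hint (n+2) (n+1) (fun k _ => m₁ (n+1-k) + m₁ k) (fun k => continuous_const)
    have hint1 : Integrable (fun θ => ∑ k ∈ Finset.range (n+1),
        bw n k θ * (m₁ (n-k) + m₁ k)) μ :=
      hint (n+1) n (fun k _ => m₁ (n-k) + m₁ k) (fun k => continuous_const)
    have key : ∀ θ : ℝ, (∑ k ∈ Finset.range (n+2), bw (n+1) k θ * (m₁ (n+1-k) + m₁ k))
        - (∑ k ∈ Finset.range (n+1), bw n k θ * (m₁ (n-k) + m₁ k))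
        = ∑ k ∈ Finset.range (n+1), bw n k θ * (θ * d k + (1-θ) * d (n-k)) := by
      intro θ
      rw [bw_split n θ (fun k => m₁ (n+1-k) + m₁ k), ← Finset.sum_sub_distrib]
      apply Finset.sum_congr rfl
      intro j hj
      rw [Finset.mem_range] at hj
      have e1' : n + 1 - (j+1) = n - j := by omega
      have e2' : n + 1 - j = (n - j) + 1 := by omega
      simp only [hd, e1', e2']
      ring
    have expand : d (n+1) = 1 + ((∫ θ, (∑ k ∈ Finset.range (n+2),
          bw (n+1) k θ * (m₁ (n+1-k) + m₁ k)) ∂μ)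
        - ∫ θ, (∑ k ∈ Finset.range (n+1), bw n k θ * (m₁ (n-k) + m₁ k)) ∂μ) := by
      simp only [hd]
      rw [e1, e2]
      push_cast
      ring
    rw [expand, ← integral_sub hint2 hint1]
    congr 1
    apply integral_congr_ae
    exact Filter.Eventually.of_forall key
  have dlb : ∀ n, 0 ≤ d n := by
    intro n
    induction n using Nat.strong_induction_on with
    | _ n ih =>
      rcases n with _ | m
      · rw [hd0]; norm_num
      · rw [drec m]
        have hnn : 0 ≤ ∫ θ, (∑ k ∈ Finset.range (m+1),
            bw m k θ * (θ * d k + (1-θ) * d (m-k))) ∂μ := by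
          apply integral_nonneg_of_ae
          filter_upwards [hae] with θ hθ
          obtain ⟨h0, h1⟩ := hθ
          apply Finset.sum_nonneg
          intro k hk
          rw [Finset.mem_range] at hk
          have i1 := ih k (by omega)
          have i2 := ih (m-k) (by omega)
          have i3 := bw_nonneg m k h0 h1
          have : 0 ≤ θ * d k + (1-θ) * d (m-k) := by nlinarith
          exact mul_nonneg i3 this
        linarith
  have dub : ∀ n, d n ≤ (n:ℝ)+1 := by
    intro n
    induction n using Nat.strong_induction_on with
    | _ n ih =>
      rcases n with _ | m
      · rw [hd0]; norm_num
      · rw [drec m]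
        have hmono' : ∫ θ, (∑ k ∈ Finset.range (m+1),
            bw m k θ * (θ * d k + (1-θ) * d (m-k))) ∂μ ≤ ∫ _θ, ((m:ℝ)+1) ∂μ := by
          apply integral_mono_ae
          · exact hint (m+1) m (fun k θ => θ * d k + (1-θ) * d (m-k)) (fun k => by fun_prop)
          · exact integrable_const _
          filter_upwards [hae] with θ hθ
          obtain ⟨h0, h1⟩ := hθ
          have step : ∑ k ∈ Finset.range (m+1), bw m k θ * (θ * d k + (1-θ) * d (m-k))
              ≤ ∑ k ∈ Finset.range (m+1), bw m k θ * ((m:ℝ)+1) := by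
            apply Finset.sum_le_sum
            intro k hk
            rw [Finset.mem_range] at hk
            have i1 := ih k (by omega)
            have i2 := ih (m-k) (by omega)
            have hk1 : (k:ℝ) ≤ (m:ℝ) := by exact_mod_cast Nat.lt_succ_iff.mp hk
            have hk2 : ((m-k : ℕ):ℝ) ≤ (m:ℝ) := by
              have : m - k ≤ m := Nat.sub_le m k
              exact_mod_cast this
            have i3 := bw_nonneg m k h0 h1
            have : θ * d k + (1-θ) * d (m-k) ≤ (m:ℝ)+1 := by nlinarith
            exact mul_le_mul_of_nonneg_left this i3
          calc ∑ k ∈ Finset.range (m+1), bw m k θ * (θ * d k + (1-θ) * d (m-k))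
              ≤ ∑ k ∈ Finset.range (m+1), bw m k θ * ((m:ℝ)+1) := step
            _ = ((m:ℝ)+1) := by
                rw [← Finset.sum_mul, bw_sum, one_mul]
        have hc : ∫ _θ, ((m:ℝ)+1) ∂μ = (m:ℝ)+1 := by
          simp [measure_univ]
        rw [hc] at hmono'
        push_cast
        linarith
  have hKint : ∀ n, Integrable (Kf n) μ := fun n =>
    integrable_of_meas_bdd μ hsupp _ (Kf_meas n).aestronglyMeasurable (Kf_contOn n)
  have hKtend : Tendsto (fun n => ∫ θ, Kf n θ ∂μ) atTop (nhds h) := by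
    rw [hdef]
    apply tendsto_integral_of_dominated_convergence (fun _ => (4:ℝ))
      (fun n => (Kf_meas n).aestronglyMeasurable) (integrable_const 4)
    · intro n
      filter_upwards [hae] with θ hθ
      simpa [Real.norm_eq_abs] using Kf_bdd n hθ
    · filter_upwards [hae] with θ hθ
      exact Kf_tendsto hθ
  obtain ⟨N₀, hN₀⟩ : ∃ N₀ : ℕ, ∀ n ≥ N₀, h/2 ≤ ∫ θ, Kf n θ ∂μ :=
    eventually_atTop.mp (hKtend.eventually_const_le (by linarith : h/2 < h))
  set N : ℕ := max N₀ 1 with hN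
  set a : ℝ := 2/h with haa
  set b : ℝ := (N:ℝ) + 1 with hbb
  have ha : 0 < a := by rw [haa]; positivity
  have hb : 0 < b := by rw [hbb]; positivity
  have hah : a * (h/2) = 1 := by rw [haa]; field_simp
  have main : ∀ n, d n ≤ a * Real.logb 2 ((n:ℝ)+1) + b := by
    intro n
    induction n using Nat.strong_induction_on with
    | _ n ih =>
      by_cases hn : n < N
      · have h1 := dub n
        have h2 : (n:ℝ) + 1 ≤ (N:ℝ) := by exact_mod_cast hn
        have hlogb : 0 ≤ Real.logb 2 ((n:ℝ)+1) :=
          Real.logb_nonneg one_lt_two (by linarith [Nat.cast_nonneg (α := ℝ) n])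
        have hmul : 0 ≤ a * Real.logb 2 ((n:ℝ)+1) := mul_nonneg ha.le hlogb
        rw [hbb]
        linarith
      · push_neg at hn
        obtain ⟨m, rfl⟩ : ∃ m, n = m + 1 := ⟨n - 1, by omega⟩
        rw [drec m]
        push_cast
        set C := Real.logb 2 ((m:ℝ)+1+1) with hC
        have hchain : ∀ᵐ θ ∂μ, (∑ k ∈ Finset.range (m+1),
              bw m k θ * (θ * d k + (1-θ) * d (m-k)))
            ≤ a * (C - Kf (m+1) θ) + b := by
          filter_upwards [hae] with θ hθ
          obtain ⟨h0, h1⟩ := hθ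
          have step1 : (∑ k ∈ Finset.range (m+1), bw m k θ * (θ * d k + (1-θ) * d (m-k)))
              ≤ ∑ k ∈ Finset.range (m+1), bw m k θ *
                  (θ * (a * Real.logb 2 ((k:ℝ)+1) + b)
                    + (1-θ) * (a * Real.logb 2 (((m+1-k : ℕ):ℝ)) + b)) := by
            apply Finset.sum_le_sum
            intro k hk
            rw [Finset.mem_range] at hk
            have i1 := ih k (by omega)
            have i2 := ih (m-k) (by omega)
            have hcst : ((m-k:ℕ):ℝ) + 1 = ((m+1-k : ℕ):ℝ) := by
              have e : m + 1 - k = (m - k) + 1 := by omega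
              rw [e]; push_cast; ring
            rw [← hcst]
            have i3 := bw_nonneg m k h0 h1
            apply mul_le_mul_of_nonneg_left _ i3
            have j1 := mul_le_mul_of_nonneg_left i1 h0
            have j2 := mul_le_mul_of_nonneg_left i2 (by linarith : (0:ℝ) ≤ 1-θ)
            linarith
          have step2 : ∑ k ∈ Finset.range (m+1), bw m k θ *
                  (θ * (a * Real.logb 2 ((k:ℝ)+1) + b)
                    + (1-θ) * (a * Real.logb 2 (((m+1-k : ℕ):ℝ)) + b))
              = a * (∑ k ∈ Finset.range (m+1), bw m k θ *
                  (θ * Real.logb 2 ((k:ℝ)+1)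
                    + (1-θ) * Real.logb 2 (((m+1-k : ℕ):ℝ)))) + b := by
            rw [Finset.mul_sum]
            have e : ∀ k ∈ Finset.range (m+1), bw m k θ *
                  (θ * (a * Real.logb 2 ((k:ℝ)+1) + b)
                    + (1-θ) * (a * Real.logb 2 (((m+1-k:ℕ):ℝ)) + b))
                = a * (bw m k θ * (θ * Real.logb 2 ((k:ℝ)+1)
                    + (1-θ) * Real.logb 2 (((m+1-k:ℕ):ℝ)))) + bw m k θ * b :=
              fun k _ => by ring
            rw [Finset.sum_congr rfl e, Finset.sum_add_distrib, ← Finset.sum_mul, bw_sum, one_mul]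
          have step3 := chain (m+1) (by omega) h0 h1
          push_cast at step3
          have step4 : a * (∑ k ∈ Finset.range (m+1), bw m k θ *
                  (θ * Real.logb 2 ((k:ℝ)+1)
                    + (1-θ) * Real.logb 2 (((m+1-k : ℕ):ℝ))))
              ≤ a * (C - Kf (m+1) θ) := by
            apply mul_le_mul_of_nonneg_left _ ha.le
            rw [hC]
            exact step3
          calc (∑ k ∈ Finset.range (m+1), bw m k θ * (θ * d k + (1-θ) * d (m-k)))
              ≤ _ := step1
            _ = _ := step2
            _ ≤ a * (C - Kf (m+1) θ) + b := by linarith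
        have int1 := hint (m+1) m (fun k θ => θ * d k + (1-θ) * d (m-k)) (fun k => by fun_prop)
        have erw : (fun θ => a * (C - Kf (m+1) θ) + b)
            = fun θ => (a*C + b) - a * Kf (m+1) θ := by funext θ; ring
        have int2 : Integrable (fun θ => a * (C - Kf (m+1) θ) + b) μ := by
          rw [erw]
          exact (integrable_const _).sub ((hKint (m+1)).const_mul a)
        have hmono2 := integral_mono_ae int1 int2 hchain
        have hval : ∫ θ, (a * (C - Kf (m+1) θ) + b) ∂μ
            = (a*C + b) - a * ∫ θ, Kf (m+1) θ ∂μ := by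
          rw [erw, integral_sub (integrable_const _) ((hKint (m+1)).const_mul a),
            integral_const_mul]
          simp [measure_univ]
        have hNm : N₀ ≤ m+1 := le_trans (le_trans (le_max_left N₀ 1) (le_of_eq hN.symm)) hn
        have hKlb : h/2 ≤ ∫ θ, Kf (m+1) θ ∂μ := hN₀ (m+1) hNm
        have hfin : 1 ≤ a * ∫ θ, Kf (m+1) θ ∂μ := by
          rw [← hah]
          exact mul_le_mul_of_nonneg_left hKlb ha.le
        rw [hval] at hmono2
        rw [hC] at *
        linarith
  -- telescoping
  have tele : ∀ K : ℕ, m₁ K = ∑ i ∈ Finset.range K, d i := by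
    intro K
    have := Finset.sum_range_sub m₁ K
    simp only [hd]
    rw [this, hm0, sub_zero]
  have diff : ∀ k : ℕ, m₁ (ℓ (k+1)) - m₁ (ℓ k) = ∑ i ∈ Finset.Ico (ℓ k) (ℓ (k+1)), d i := by
    intro k
    rw [tele, tele, Finset.sum_Ico_eq_sub _ (le_of_lt (hmono (lt_add_one k)))]
  have diff_nonneg : ∀ k : ℕ, 0 ≤ m₁ (ℓ (k+1)) - m₁ (ℓ k) := by
    intro k
    rw [diff k]
    exact Finset.sum_nonneg fun i _ => dlb i
  have diff_ub : ∀ k : ℕ, m₁ (ℓ (k+1)) - m₁ (ℓ k)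
      ≤ ((ℓ (k+1) : ℝ) - (ℓ k : ℝ)) * (a * Real.logb 2 (ℓ (k+1)) + b) := by
    intro k
    rw [diff k]
    have hle : ∀ i ∈ Finset.Ico (ℓ k) (ℓ (k+1)), d i ≤ a * Real.logb 2 (ℓ (k+1)) + b := by
      intro i hi
      rw [Finset.mem_Ico] at hi
      refine (main i).trans ?_
      have h1 : (1:ℝ) ≤ (i:ℝ) + 1 := by
        have := Nat.cast_nonneg (α := ℝ) i; linarith
      have h2 : (i:ℝ) + 1 ≤ (ℓ (k+1) : ℝ) := by
        have : i + 1 ≤ ℓ (k+1) := hi.2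
        exact_mod_cast this
      have := Real.logb_le_logb_of_le one_lt_two (by linarith : (0:ℝ) < (i:ℝ)+1) h2
      nlinarith
    have := Finset.sum_le_card_nsmul _ _ _ hle
    rw [Nat.card_Ico] at this
    have hcast : ((ℓ (k+1) - ℓ k : ℕ) : ℝ) = (ℓ (k+1) : ℝ) - (ℓ k : ℝ) := by
      have : ℓ k ≤ ℓ (k+1) := le_of_lt (hmono (lt_add_one k))
      exact Nat.cast_sub this
    calc ∑ i ∈ Finset.Ico (ℓ k) (ℓ (k+1)), d i
        ≤ (ℓ (k+1) - ℓ k) • (a * Real.logb 2 (ℓ (k+1)) + b) := this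
      _ = ((ℓ (k+1) : ℝ) - (ℓ k : ℝ)) * (a * Real.logb 2 (ℓ (k+1)) + b) := by
          rw [nsmul_eq_mul, hcast]
  -- squeeze
  have hLpos : ∀ k : ℕ, (0:ℝ) < (ℓ k : ℝ) := by
    intro k
    have : (0:ℕ) < ℓ k := by have := hℓ2 k; omega
    exact_mod_cast this
  have hL : ∀ k : ℕ, 1 ≤ Real.logb 2 (ℓ k) := by
    intro k
    have h2 : (2:ℝ) ≤ (ℓ k : ℝ) := by exact_mod_cast hℓ2 k
    have := Real.logb_le_logb_of_le one_lt_two (by norm_num : (0:ℝ) < 2) h2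
    rwa [Real.logb_self_eq_one one_lt_two] at this
  have hden : ∀ k : ℕ, 0 < (ℓ k : ℝ) * Real.logb 2 (ℓ k) := by
    intro k
    have := hLpos k
    nlinarith [hL k]
  have g0 : Tendsto (fun k => ((ℓ (k+1) : ℝ)/(ℓ k : ℝ) - 1) * (2*a + b)) atTop (nhds 0) := by
    have := (hratio.sub_const 1).mul_const (2*a+b)
    simpa using this
  apply squeeze_zero' (Filter.Eventually.of_forall fun k =>
    div_nonneg (diff_nonneg k) (hden k).le) _ g0
  have hev := hratio.eventually_lt_const (by norm_num : (1:ℝ) < 2)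
  filter_upwards [hev] with k hk
  have pk := hLpos k
  have pk1 := hLpos (k+1)
  have hlt : (ℓ (k+1) : ℝ) < 2 * (ℓ k : ℝ) := by
    rw [div_lt_iff₀ pk] at hk; linarith
  have hlogk1 : Real.logb 2 (ℓ (k+1)) ≤ 1 + Real.logb 2 (ℓ k) := by
    have h1 : Real.logb 2 (ℓ (k+1)) ≤ Real.logb 2 (2 * (ℓ k : ℝ)) :=
      Real.logb_le_logb_of_le one_lt_two pk1 hlt.le
    rwa [Real.logb_mul two_ne_zero (ne_of_gt pk),
      Real.logb_self_eq_one one_lt_two] at h1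
  rw [div_le_iff₀ (hden k)]
  have hΔ : (0:ℝ) ≤ (ℓ (k+1) : ℝ) - (ℓ k : ℝ) := by
    have : ℓ k ≤ ℓ (k+1) := le_of_lt (hmono (lt_add_one k))
    have : (ℓ k : ℝ) ≤ (ℓ (k+1) : ℝ) := by exact_mod_cast this
    linarith
  have hfac : a * Real.logb 2 (ℓ (k+1)) + b ≤ (2*a + b) * Real.logb 2 (ℓ k) := by
    nlinarith [hL k, ha, hb, mul_le_mul_of_nonneg_left hlogk1 ha.le]
  have hub := diff_ub k
  have hmul := mul_le_mul_of_nonneg_left hfac hΔ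
  have halg : ((ℓ (k+1) : ℝ)/(ℓ k : ℝ) - 1) * (2*a + b) * ((ℓ k : ℝ) * Real.logb 2 (ℓ k))
      = ((ℓ (k+1) : ℝ) - (ℓ k : ℝ)) * ((2*a + b) * Real.logb 2 (ℓ k)) := by
    field_simp
  rw [halg]
  linarith
end
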